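/- arXiv:1012.3846 — 5 statements merged into one kernel-verified Lean document; each statement's English description precedes it below -/
import Mathlib

section
/- Let u, v : ℝ × ℝ → ℝ be the conjugate harmonic functions u(x,y) = x³ − 3xy² − 3x and v(x,y) = −y³ + 3x²y − 3y (the real and imaginary parts of f(z) = z³ − 3z). Then the graphs of u and v have the same Gaussian curvature at every point, that is, (u_xx·u_yy − u_xy²)/(1 + u_x² + u_y²)² = (v_xx·v_yy − v_xy²)/(1 + v_x² + v_y²)² everywhere, yet u and v are not topologically equivalent: there do not exist a homeomorphism φ : ℝ × ℝ → ℝ × ℝ and a homeomorphism ψ : ℝ → ℝ such that ψ ∘ u = v ∘ φ. -/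
open ContinuousLinearMap in
lemma fd_eval (f : ℝ × ℝ → ℝ) (a b : ℝ) (p : ℝ × ℝ)
    (h : HasFDerivAt f (a • (fst ℝ ℝ ℝ) + b • (snd ℝ ℝ ℝ)) p) :
    fderiv ℝ f p (1, 0) = a ∧ fderiv ℝ f p (0, 1) = b := by
  rw [h.fderiv]; constructor <;> simp

open ContinuousLinearMap in
lemma hfd_u (x y : ℝ) :
    HasFDerivAt (fun p : ℝ × ℝ => p.1 ^ 3 - 3 * p.1 * p.2 ^ 2 - 3 * p.1)
      ((3*x^2 - 3*y^2 - 3) • (fst ℝ ℝ ℝ) + (-(6*x*y)) • (snd ℝ ℝ ℝ)) (x, y) := by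
  have hfun : (fun p : ℝ × ℝ => p.1 ^ 3 - 3 * p.1 * p.2 ^ 2 - 3 * p.1)
      = fun p : ℝ × ℝ => p.1 * p.1 * p.1 - 3 * p.1 * (p.2 * p.2) - 3 * p.1 := by
    funext p; ring
  rw [hfun]
  have F : HasFDerivAt (fun p : ℝ × ℝ => p.1) (fst ℝ ℝ ℝ) (x, y) := hasFDerivAt_fst
  have S : HasFDerivAt (fun p : ℝ × ℝ => p.2) (snd ℝ ℝ ℝ) (x, y) := hasFDerivAt_snd
  have h := (((F.mul F).mul F).sub ((F.const_mul 3).mul (S.mul S))).sub (F.const_mul 3)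
  refine h.congr_fderiv ?_
  ext <;> simp <;> ring

open ContinuousLinearMap in
lemma hfd_v (x y : ℝ) :
    HasFDerivAt (fun p : ℝ × ℝ => -p.2 ^ 3 + 3 * p.1 ^ 2 * p.2 - 3 * p.2)
      ((6*x*y) • (fst ℝ ℝ ℝ) + (3*x^2 - 3*y^2 - 3) • (snd ℝ ℝ ℝ)) (x, y) := by
  have hfun : (fun p : ℝ × ℝ => -p.2 ^ 3 + 3 * p.1 ^ 2 * p.2 - 3 * p.2)
      = fun p : ℝ × ℝ => 3 * p.1 * (p.1 * p.2) - p.2 * p.2 * p.2 - 3 * p.2 := by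
    funext p; ring
  rw [hfun]
  have F : HasFDerivAt (fun p : ℝ × ℝ => p.1) (fst ℝ ℝ ℝ) (x, y) := hasFDerivAt_fst
  have S : HasFDerivAt (fun p : ℝ × ℝ => p.2) (snd ℝ ℝ ℝ) (x, y) := hasFDerivAt_snd
  have h := (((F.const_mul 3).mul (F.mul S)).sub ((S.mul S).mul S)).sub (S.const_mul 3)
  refine h.congr_fderiv ?_
  ext <;> simp <;> ring

open ContinuousLinearMap in
lemma hfd_g2 (x y : ℝ) :
    HasFDerivAt (fun p : ℝ × ℝ => 3 * p.1 ^ 2 - 3 * p.2 ^ 2 - 3)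
      ((6*x) • (fst ℝ ℝ ℝ) + (-(6*y)) • (snd ℝ ℝ ℝ)) (x, y) := by
  have hfun : (fun p : ℝ × ℝ => 3 * p.1 ^ 2 - 3 * p.2 ^ 2 - 3)
      = fun p : ℝ × ℝ => 3 * p.1 * p.1 - 3 * p.2 * p.2 - 3 := by funext p; ring
  rw [hfun]
  have F : HasFDerivAt (fun p : ℝ × ℝ => p.1) (fst ℝ ℝ ℝ) (x, y) := hasFDerivAt_fst
  have S : HasFDerivAt (fun p : ℝ × ℝ => p.2) (snd ℝ ℝ ℝ) (x, y) := hasFDerivAt_snd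
  have h := (((F.const_mul 3).mul F).sub ((S.const_mul 3).mul S)).sub (hasFDerivAt_const 3 (x,y))
  refine h.congr_fderiv ?_
  ext <;> simp <;> ring

open ContinuousLinearMap in
lemma hfd_g3 (x y : ℝ) :
    HasFDerivAt (fun p : ℝ × ℝ => -(6 * p.1 * p.2))
      ((-(6*y)) • (fst ℝ ℝ ℝ) + (-(6*x)) • (snd ℝ ℝ ℝ)) (x, y) := by
  have F : HasFDerivAt (fun p : ℝ × ℝ => p.1) (fst ℝ ℝ ℝ) (x, y) := hasFDerivAt_fst
  have S : HasFDerivAt (fun p : ℝ × ℝ => p.2) (snd ℝ ℝ ℝ) (x, y) := hasFDerivAt_snd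
  have h := ((F.const_mul 6).mul S).neg
  refine h.congr_fderiv ?_
  ext <;> simp <;> ring

open ContinuousLinearMap in
lemma hfd_g5 (x y : ℝ) :
    HasFDerivAt (fun p : ℝ × ℝ => 6 * p.1 * p.2)
      ((6*y) • (fst ℝ ℝ ℝ) + (6*x) • (snd ℝ ℝ ℝ)) (x, y) := by
  have F : HasFDerivAt (fun p : ℝ × ℝ => p.1) (fst ℝ ℝ ℝ) (x, y) := hasFDerivAt_fst
  have S : HasFDerivAt (fun p : ℝ × ℝ => p.2) (snd ℝ ℝ ℝ) (x, y) := hasFDerivAt_snd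
  have h := (F.const_mul 6).mul S
  refine h.congr_fderiv ?_
  ext <;> simp <;> ring



/-- The conjugate harmonic functions `u(x,y) = x³ − 3xy² − 3x` and
`v(x,y) = −y³ + 3x²y − 3y` have graphs with the same Gaussian curvature
everywhere, but `u` and `v` are not topologically equivalent. -/
theorem conjugate_harmonic_same_curvature_not_top_equiv
    (u v : ℝ × ℝ → ℝ)
    (hu : ∀ x y : ℝ, u (x, y) = x ^ 3 - 3 * x * y ^ 2 - 3 * x)
    (hv : ∀ x y : ℝ, v (x, y) = -y ^ 3 + 3 * x ^ 2 * y - 3 * y) :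
    (∀ p : ℝ × ℝ,
      (fderiv ℝ (fun q => fderiv ℝ u q (1, 0)) p (1, 0) *
         fderiv ℝ (fun q => fderiv ℝ u q (0, 1)) p (0, 1) -
       (fderiv ℝ (fun q => fderiv ℝ u q (1, 0)) p (0, 1)) ^ 2) /
        (1 + (fderiv ℝ u p (1, 0)) ^ 2 + (fderiv ℝ u p (0, 1)) ^ 2) ^ 2
      =
      (fderiv ℝ (fun q => fderiv ℝ v q (1, 0)) p (1, 0) *
         fderiv ℝ (fun q => fderiv ℝ v q (0, 1)) p (0, 1) -
       (fderiv ℝ (fun q => fderiv ℝ v q (1, 0)) p (0, 1)) ^ 2) /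
        (1 + (fderiv ℝ v p (1, 0)) ^ 2 + (fderiv ℝ v p (0, 1)) ^ 2) ^ 2) ∧
    ¬ ∃ (φ : (ℝ × ℝ) ≃ₜ (ℝ × ℝ)) (ψ : ℝ ≃ₜ ℝ),
        ∀ p : ℝ × ℝ, ψ (u p) = v (φ p) := by
  constructor
  · have hu' : u = fun p : ℝ × ℝ => p.1 ^ 3 - 3 * p.1 * p.2 ^ 2 - 3 * p.1 :=
      funext fun p => by rcases p with ⟨x, y⟩; exact hu x y
    have hv' : v = fun p : ℝ × ℝ => -p.2 ^ 3 + 3 * p.1 ^ 2 * p.2 - 3 * p.2 :=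
      funext fun p => by rcases p with ⟨x, y⟩; exact hv x y
    have du : ∀ p : ℝ × ℝ, fderiv ℝ u p (1,0) = 3*p.1^2-3*p.2^2-3 ∧
        fderiv ℝ u p (0,1) = -(6*p.1*p.2) := by
      rintro ⟨x, y⟩; rw [hu']; exact fd_eval _ _ _ _ (hfd_u x y)
    have dv : ∀ p : ℝ × ℝ, fderiv ℝ v p (1,0) = 6*p.1*p.2 ∧
        fderiv ℝ v p (0,1) = 3*p.1^2-3*p.2^2-3 := by
      rintro ⟨x, y⟩; rw [hv']; exact fd_eval _ _ _ _ (hfd_v x y)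
    have eu1 : (fun q => fderiv ℝ u q (1,0)) = fun q : ℝ × ℝ => 3*q.1^2-3*q.2^2-3 :=
      funext fun q => (du q).1
    have eu2 : (fun q => fderiv ℝ u q (0,1)) = fun q : ℝ × ℝ => -(6*q.1*q.2) :=
      funext fun q => (du q).2
    have ev1 : (fun q => fderiv ℝ v q (1,0)) = fun q : ℝ × ℝ => 6*q.1*q.2 :=
      funext fun q => (dv q).1
    have ev2 : (fun q => fderiv ℝ v q (0,1)) = fun q : ℝ × ℝ => 3*q.1^2-3*q.2^2-3 :=
      funext fun q => (dv q).2
    rintro ⟨x, y⟩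
    rw [eu1, eu2, ev1, ev2, (du (x,y)).1, (du (x,y)).2, (dv (x,y)).1, (dv (x,y)).2,
      (fd_eval _ _ _ _ (hfd_g2 x y)).1, (fd_eval _ _ _ _ (hfd_g2 x y)).2,
      (fd_eval _ _ _ _ (hfd_g3 x y)).2, (fd_eval _ _ _ _ (hfd_g5 x y)).1,
      (fd_eval _ _ _ _ (hfd_g5 x y)).2]
    ring
  · rintro ⟨φ, ψ, h⟩
    set c := ψ.symm 0 with hc0
    have hfib : ∀ p : ℝ × ℝ, u p = c ↔ v (φ p) = 0 := by
      intro p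
      constructor
      · intro hp; rw [← h p, hp, hc0, Homeomorph.apply_symm_apply]
      · intro hp
        have := h p
        rw [hp] at this
        have := congrArg ψ.symm this
        rwa [Homeomorph.symm_apply_apply] at this
    -- the zero level set of v
    set T : Set (ℝ × ℝ) := {q | v q = 0} with hT0
    set L : Set (ℝ × ℝ) := Set.range (fun t : ℝ => ((t, 0) : ℝ × ℝ)) with hL0
    set Hp : Set (ℝ × ℝ) := Set.range (fun t : ℝ => ((Real.sqrt (1 + t ^ 2 / 3), t) : ℝ × ℝ)) with hHp0
    set Hm : Set (ℝ × ℝ) := Set.range (fun t : ℝ => ((-Real.sqrt (1 + t ^ 2 / 3), t) : ℝ × ℝ)) with hHm0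
    have hsq : ∀ t : ℝ, Real.sqrt (1 + t ^ 2 / 3) ^ 2 = 1 + t ^ 2 / 3 := by
      intro t; exact Real.sq_sqrt (by positivity)
    have hTeq : T = (L ∪ Hp) ∪ Hm := by
      ext ⟨x, y⟩
      simp only [hT0, hL0, hHp0, hHm0, Set.mem_setOf_eq, Set.mem_union, Set.mem_range,
        Prod.mk.injEq, hv]
      constructor
      · intro hxy
        by_cases hy : y = 0
        · exact Or.inl (Or.inl ⟨x, rfl, hy.symm⟩)
        · have hx2 : x ^ 2 = 1 + y ^ 2 / 3 := by
            have : y * (3 * x ^ 2 - y ^ 2 - 3) = 0 := by linarith [hxy]; 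
            rcases mul_eq_zero.mp this with h' | h'
            · exact absurd h' hy
            · linarith
          have habs : Real.sqrt (1 + y ^ 2 / 3) = |x| := by
            rw [← hx2, Real.sqrt_sq_eq_abs]
          rcases le_or_gt 0 x with hx | hx
          · exact Or.inl (Or.inr ⟨y, by rw [habs, abs_of_nonneg hx], rfl⟩)
          · exact Or.inr ⟨y, by rw [habs, abs_of_neg hx, neg_neg], rfl⟩
      · rintro ((⟨t, rfl, rfl⟩ | ⟨t, rfl, rfl⟩) | ⟨t, rfl, rfl⟩)
        · ring
        · linear_combination (3*t) * hsq t
        · linear_combination (3*t) * hsq t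
    have hL : IsConnected L :=
      isConnected_range (by continuity)
    have hcs : Continuous fun t : ℝ => Real.sqrt (1 + t ^ 2 / 3) :=
      Real.continuous_sqrt.comp (by continuity)
    have hHp : IsConnected Hp := isConnected_range (hcs.prodMk continuous_id)
    have hHm : IsConnected Hm := isConnected_range (hcs.neg.prodMk continuous_id)
    have hone : Real.sqrt (1 + (0:ℝ) ^ 2 / 3) = 1 := by norm_num
    have m1L : ((1:ℝ), (0:ℝ)) ∈ L := ⟨1, rfl⟩
    have m1Hp : ((1:ℝ), (0:ℝ)) ∈ Hp := ⟨0, by simp [hone]⟩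
    have m2L : ((-1:ℝ), (0:ℝ)) ∈ L := ⟨-1, rfl⟩
    have m2Hm : ((-1:ℝ), (0:ℝ)) ∈ Hm := ⟨0, by simp [hone]⟩
    have hTcon : IsConnected T := by
      rw [hTeq]
      exact (hL.union ⟨((1:ℝ), (0:ℝ)), m1L, m1Hp⟩ hHp).union
        ⟨((-1:ℝ), (0:ℝ)), Or.inl m2L, m2Hm⟩ hHm
    -- the fiber of u over c is the image of T under φ.symm, hence connected
    have hSeq : {p : ℝ × ℝ | u p = c} = φ.symm '' T := by
      ext p
      constructor
      · intro hp; exact ⟨φ p, (hfib p).mp hp, φ.symm_apply_apply p⟩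
      · rintro ⟨q, hq, rfl⟩
        have : v (φ (φ.symm q)) = 0 := by rwa [φ.apply_symm_apply]
        exact (hfib _).mpr this
    have hScon : IsConnected {p : ℝ × ℝ | u p = c} := by
      rw [hSeq]; exact hTcon.image _ φ.symm.continuous.continuousOn
    -- but the fiber of u over c is disconnected
    obtain ⟨a, pl, pr, hbar, hpl, hpl1, hpr, hpr1⟩ :
        ∃ (a : ℝ) (pl pr : ℝ × ℝ), (∀ y : ℝ, u (a, y) ≠ c) ∧
          u pl = c ∧ pl.1 < a ∧ u pr = c ∧ a < pr.1 := by
      by_cases hc : c = 0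
      · refine ⟨1, (0, 0), (2, Real.sqrt (1/3)), ?_, ?_, by norm_num, ?_, by norm_num⟩
        · intro y; rw [hu, hc]; nlinarith [sq_nonneg y]
        · rw [hu, hc]; ring
        · rw [hu, hc]
          have hs : Real.sqrt (1/3) ^ 2 = 1/3 := Real.sq_sqrt (by norm_num)
          linear_combination (-6 : ℝ) * hs
      · set b : ℝ := |c| + 2 with hb0
        have hb2 : 2 ≤ b := by have := abs_nonneg c; linarith
        have hbn : (0:ℝ) ≤ b := by linarith
        have key : 0 ≤ b * (b - 2) * (b + 2) :=
          mul_nonneg (mul_nonneg hbn (by linarith)) (by linarith)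
        have hbc1 : c ≤ b ^ 3 - 3 * b := by
          have := le_abs_self c
          nlinarith [key]
        have hbc2 : -c ≤ b ^ 3 - 3 * b := by
          have := neg_abs_le c
          nlinarith [key]
        have hb3 : (0:ℝ) < 3 * b := by linarith
        refine ⟨0, (-b, Real.sqrt ((b ^ 3 - 3 * b + c) / (3 * b))),
          (b, Real.sqrt ((b ^ 3 - 3 * b - c) / (3 * b))), ?_, ?_, by simpa using by linarith, ?_, by simpa using by linarith⟩
        · intro y; rw [hu]; simpa using fun h => hc (by linarith)
        · rw [hu]
          have hnn : (0:ℝ) ≤ (b ^ 3 - 3 * b + c) / (3 * b) :=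
            div_nonneg (by linarith) (le_of_lt hb3)
          have := Real.sq_sqrt hnn
          field_simp at this ⊢
          nlinarith [this]
        · rw [hu]
          have hnn : (0:ℝ) ≤ (b ^ 3 - 3 * b - c) / (3 * b) := by
            apply div_nonneg _ (le_of_lt hb3); linarith
          have := Real.sq_sqrt hnn
          field_simp at this ⊢
          nlinarith [this]
    have hA : IsOpen {p : ℝ × ℝ | p.1 < a} := isOpen_lt continuous_fst continuous_const
    have hB : IsOpen {p : ℝ × ℝ | a < p.1} := isOpen_lt continuous_const continuous_fst
    have hcover : {p : ℝ × ℝ | u p = c} ⊆ {p : ℝ × ℝ | p.1 < a} ∪ {p : ℝ × ℝ | a < p.1} := by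
      intro p hp
      rcases lt_trichotomy p.1 a with h' | h' | h'
      · exact Or.inl h'
      · exact absurd (by rw [← Prod.mk.eta (p := p), h'] at hp; exact hp) (hbar p.2)
      · exact Or.inr h'
    obtain ⟨q, hqS, hqA, hqB⟩ := hScon.isPreconnected _ _ hA hB hcover ⟨pl, hpl, hpl1⟩ ⟨pr, hpr, hpr1⟩
    simp only [Set.mem_setOf_eq] at hqA hqB
    exact lt_asymm hqA hqB
end

section
/- Let P and Q be complex polynomials whose degrees are different, with at least one of the two degrees at least 2. Then the curvature functions of P and Q differ: there exists z ∈ ℂ such that G_P(z) ≠ G_Q(z), i.e. −|P''(z)|²/(1 + |P'(z)|²)² ≠ −|Q''(z)|²/(1 + |Q'(z)|²)². Consequently, the Gaussian curvatures of the graphs of the harmonic polynomials Re P and Re Q do not coincide. -/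
open Complex Polynomial

lemma nd_deriv (p : ℂ[X]) (hp : 0 < p.natDegree) :
    (derivative p).natDegree = p.natDegree - 1 :=
  natDegree_eq_of_degree_eq_some (degree_derivative_eq p hp)

lemma deriv_ne_zero (p : ℂ[X]) (hp : 0 < p.natDegree) : derivative p ≠ 0 := by
  intro h
  have := natDegree_eq_zero_of_derivative_eq_zero h
  omega

lemma conj_eval (R : ℂ[X]) (t : ℝ) :
    (R.map (starRingEnd ℂ)).eval (t : ℂ) = starRingEnd ℂ (R.eval (t : ℂ)) := by
  have h : ((t : ℂ)) = starRingEnd ℂ (t : ℂ) := by simp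
  conv_lhs => rw [h]
  rw [eval_map, eval₂_hom]

lemma eval_mul_conj (R : ℂ[X]) (t : ℝ) :
    (R * R.map (starRingEnd ℂ)).eval (t : ℂ)
      = ((norm (R.eval (t : ℂ)))^2 : ℝ) := by
  rw [eval_mul, conj_eval, Complex.mul_conj, Complex.sq_norm]

lemma aux (P Q : ℂ[X]) (hlt : Q.natDegree < P.natDegree) (h2 : 2 ≤ P.natDegree)
    (heq : ∀ z : ℂ,
      (norm ((derivative (derivative P)).eval z))^2 *
        (1 + (norm ((derivative Q).eval z))^2)^2 =
      (norm ((derivative (derivative Q)).eval z))^2 *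
        (1 + (norm ((derivative P).eval z))^2)^2) : False := by
  set n := P.natDegree with hn
  set m := Q.natDegree with hm
  have hp1nd : (derivative P).natDegree = n - 1 := nd_deriv P (by omega)
  have hp1ne : derivative P ≠ 0 := deriv_ne_zero P (by omega)
  have hp2nd : (derivative (derivative P)).natDegree = n - 2 := by
    rw [nd_deriv (derivative P) (by omega), hp1nd]; omega
  have hp2ne : derivative (derivative P) ≠ 0 := deriv_ne_zero (derivative P) (by omega)
  rcases le_or_gt m 1 with hm1 | hm1
  · -- Q'' = 0
    have hq1nd : (derivative Q).natDegree = 0 := by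
      have := natDegree_derivative_le Q
      omega
    have hq2 : derivative (derivative Q) = 0 := by
      rw [eq_C_of_natDegree_eq_zero hq1nd, derivative_C]
    obtain ⟨z, hz⟩ : ∃ z : ℂ, (derivative (derivative P)).eval z ≠ 0 := by
      refine (derivative (derivative P)).exists_eval_ne_zero_of_natDegree_lt_card hp2ne ?_
      exact lt_of_lt_of_le (Cardinal.nat_lt_aleph0 _) (Cardinal.aleph0_le_mk ℂ)
    have := heq z
    rw [hq2] at this
    simp only [eval_zero, map_zero, norm_zero] at this
    have hpos1 : (0:ℝ) < (1 + (norm ((derivative Q).eval z))^2)^2 := by positivity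
    have habs : (norm ((derivative (derivative P)).eval z))^2 = 0 := by
      nlinarith [hpos1]
    exact hz (by simpa using pow_eq_zero_iff (n := 2) (by norm_num) |>.mp habs)
  · -- 2 ≤ m : polynomial degree argument
    have hq1nd : (derivative Q).natDegree = m - 1 := nd_deriv Q (by omega)
    have hq1ne : derivative Q ≠ 0 := deriv_ne_zero Q (by omega)
    have hq2nd : (derivative (derivative Q)).natDegree = m - 2 := by
      rw [nd_deriv (derivative Q) (by omega), hq1nd]; omega
    have hq2ne : derivative (derivative Q) ≠ 0 := deriv_ne_zero (derivative Q) (by omega)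
    set cj : ℂ[X] → ℂ[X] := fun R => R.map (starRingEnd ℂ) with hcj
    have cjnd : ∀ R : ℂ[X], (cj R).natDegree = R.natDegree := fun R =>
      natDegree_map (starRingEnd ℂ)
    have cjne : ∀ R : ℂ[X], R ≠ 0 → cj R ≠ 0 := fun R hR =>
      (Polynomial.map_ne_zero_iff (starRingEnd ℂ).injective).mpr hR
    set A : ℂ[X] := (derivative (derivative P) * cj (derivative (derivative P))) *
        (1 + derivative Q * cj (derivative Q))^2 with hA
    set B : ℂ[X] := (derivative (derivative Q) * cj (derivative (derivative Q))) *
        (1 + derivative P * cj (derivative P))^2 with hB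
    have hABeval : ∀ t : ℝ, A.eval (t:ℂ) = B.eval (t:ℂ) := by
      intro t
      rw [hA, hB]
      simp only [eval_mul, eval_pow, eval_add, eval_one, hcj]
      have e1 := eval_mul_conj (derivative (derivative P)) t
      have e2 := eval_mul_conj (derivative Q) t
      have e3 := eval_mul_conj (derivative (derivative Q)) t
      have e4 := eval_mul_conj (derivative P) t
      rw [eval_mul] at e1 e2 e3 e4
      rw [e1, e2, e3, e4]
      exact_mod_cast congrArg (Complex.ofReal) (heq (t:ℂ))
    have hABeq : A = B := by
      apply eq_of_infinite_eval_eq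
      exact Set.infinite_of_injective_forall_mem (f := fun t : ℝ => (t : ℂ))
        Complex.ofReal_injective (fun t => hABeval t)
    -- degrees
    have hSQ : (derivative Q * cj (derivative Q)).natDegree = (m-1) + (m-1) := by
      rw [natDegree_mul hq1ne (cjne _ hq1ne), cjnd, hq1nd]
    have hSP : (derivative P * cj (derivative P)).natDegree = (n-1) + (n-1) := by
      rw [natDegree_mul hp1ne (cjne _ hp1ne), cjnd, hp1nd]
    have hQ1 : (1 + derivative Q * cj (derivative Q)).natDegree = (m-1)+(m-1) := by
      rw [natDegree_add_eq_right_of_natDegree_lt (by rw [hSQ, natDegree_one]; omega), hSQ]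
    have hP1 : (1 + derivative P * cj (derivative P)).natDegree = (n-1)+(n-1) := by
      rw [natDegree_add_eq_right_of_natDegree_lt (by rw [hSP, natDegree_one]; omega), hSP]
    have hQ1ne : (1 + derivative Q * cj (derivative Q)) ≠ 0 := by
      intro h; rw [h, natDegree_zero] at hQ1; omega
    have hP1ne : (1 + derivative P * cj (derivative P)) ≠ 0 := by
      intro h; rw [h, natDegree_zero] at hP1; omega
    have hAnd : A.natDegree = (n-2)+(n-2) + 2*((m-1)+(m-1)) := by
      rw [hA, natDegree_mul (mul_ne_zero hp2ne (cjne _ hp2ne)) (pow_ne_zero 2 hQ1ne),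
        natDegree_mul hp2ne (cjne _ hp2ne), natDegree_pow, cjnd, hp2nd, hQ1]
    have hBnd : B.natDegree = (m-2)+(m-2) + 2*((n-1)+(n-1)) := by
      rw [hB, natDegree_mul (mul_ne_zero hq2ne (cjne _ hq2ne)) (pow_ne_zero 2 hP1ne),
        natDegree_mul hq2ne (cjne _ hq2ne), natDegree_pow, cjnd, hq2nd, hP1]
    rw [hABeq, hBnd] at hAnd
    omega

/-- Complex polynomials of different degrees (at least one of degree ≥ 2)
have different curvature functions `G_P = -|P''|²/(1+|P'|²)²`. -/
theorem curvature_ne_of_degree_ne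
    (P Q : Polynomial ℂ) (hne : P.natDegree ≠ Q.natDegree)
    (hdeg : 2 ≤ P.natDegree ∨ 2 ≤ Q.natDegree) :
    ∃ z : ℂ,
      -(norm ((Polynomial.derivative (Polynomial.derivative P)).eval z)) ^ 2 /
          (1 + (norm ((Polynomial.derivative P).eval z)) ^ 2) ^ 2
      ≠
      -(norm ((Polynomial.derivative (Polynomial.derivative Q)).eval z)) ^ 2 /
          (1 + (norm ((Polynomial.derivative Q).eval z)) ^ 2) ^ 2 := by
  by_contra h
  push_neg at h
  have key : ∀ z : ℂ,
      (norm ((derivative (derivative P)).eval z))^2 *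
        (1 + (norm ((derivative Q).eval z))^2)^2 =
      (norm ((derivative (derivative Q)).eval z))^2 *
        (1 + (norm ((derivative P).eval z))^2)^2 := by
    intro z
    have hz := h z
    have d1 : (0:ℝ) < (1 + (norm ((derivative P).eval z))^2)^2 := by positivity
    have d2 : (0:ℝ) < (1 + (norm ((derivative Q).eval z))^2)^2 := by positivity
    rw [div_eq_div_iff d1.ne' d2.ne', neg_mul, neg_mul, neg_inj] at hz
    exact hz
  rcases lt_or_gt_of_ne hne with hlt | hlt
  · exact aux Q P hlt (by omega) (fun z => (key z).symm)
  · exact aux P Q hlt (by omega) key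
end

section
/- Let P and Q be complex polynomials, each of degree at least 2. Then the curvature functions G_P and G_Q coincide on all of ℂ (i.e. for every z ∈ ℂ, −|P''(z)|²/(1 + |P'(z)|²)² = −|Q''(z)|²/(1 + |Q'(z)|²)²) if and only if there exist complex numbers α and β with |α| = 1 such that P = α·Q + β (as polynomials, i.e. P(z) = α·Q(z) + β for all z ∈ ℂ). -/
open Complex Polynomial

noncomputable section CurvAux
namespace CurvAux

/-- conjugate the coefficients of a polynomial -/
def cc (p : Polynomial ℂ) : Polynomial ℂ := p.map (starRingEnd ℂ)

lemma cc_cc (p : Polynomial ℂ) : cc (cc p) = p := by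
  simp only [cc, Polynomial.map_map]
  have : (starRingEnd ℂ).comp (starRingEnd ℂ) = RingHom.id ℂ := by
    ext x; simp
  rw [this, Polynomial.map_id]

lemma cc_eval (p : Polynomial ℂ) (z : ℂ) :
    (cc p).eval (starRingEnd ℂ z) = starRingEnd ℂ (p.eval z) := by
  simp [cc, Polynomial.eval_map, Polynomial.eval₂_at_apply]

lemma cc_ne_zero {p : Polynomial ℂ} (hp : p ≠ 0) : cc p ≠ 0 := by
  simpa [cc, Polynomial.map_ne_zero] using hp

lemma natDegree_cc (p : Polynomial ℂ) : (cc p).natDegree = p.natDegree :=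
  Polynomial.natDegree_map_eq_of_injective (starRingEnd ℂ).injective p

lemma leadingCoeff_cc (p : Polynomial ℂ) :
    (cc p).leadingCoeff = starRingEnd ℂ p.leadingCoeff := by
  rw [Polynomial.leadingCoeff, natDegree_cc, cc, Polynomial.coeff_map]
  rfl

lemma natDegree_derivative_eq' {p : Polynomial ℂ} (hp : 0 < p.natDegree) :
    (derivative p).natDegree = p.natDegree - 1 :=
  Polynomial.natDegree_eq_of_degree_eq_some (Polynomial.degree_derivative_eq p hp)

lemma derivative_ne_zero' {p : Polynomial ℂ} (hp : 0 < p.natDegree) :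
    derivative p ≠ 0 := fun h => by
  have := Polynomial.natDegree_eq_zero_of_derivative_eq_zero h
  omega

lemma leadingCoeff_derivative' {p : Polynomial ℂ} (hp : 0 < p.natDegree) :
    (derivative p).leadingCoeff = (p.natDegree : ℂ) * p.leadingCoeff := by
  rw [Polynomial.leadingCoeff, natDegree_derivative_eq' hp, Polynomial.coeff_derivative]
  rw [Polynomial.leadingCoeff]
  have h1 : p.natDegree - 1 + 1 = p.natDegree := Nat.succ_pred_eq_of_pos hp
  rw [h1]
  push_cast [Nat.cast_sub (by omega : 1 ≤ p.natDegree)]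
  ring

lemma natDegree_one_add {c : ℂ} {p : Polynomial ℂ} (hp : 0 < p.natDegree) (hc : c ≠ 0) :
    (1 + Polynomial.C c * p).natDegree = p.natDegree := by
  rw [Polynomial.natDegree_add_eq_right_of_natDegree_lt, Polynomial.natDegree_C_mul hc]
  rw [Polynomial.natDegree_C_mul hc, Polynomial.natDegree_one]
  exact hp

lemma one_add_ne_zero {c : ℂ} {p : Polynomial ℂ} (hp : 0 < p.natDegree) (hc : c ≠ 0) :
    (1 + Polynomial.C c * p) ≠ 0 := by
  intro h
  have := natDegree_one_add hp hc
  rw [h, Polynomial.natDegree_zero] at this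
  omega

/-- evaluation of a two-variable polynomial -/
def ev2 (F : Polynomial (Polynomial ℂ)) (z w : ℂ) : ℂ :=
  Polynomial.eval₂ (Polynomial.evalRingHom z) w F

lemma key_subst (p q : Polynomial ℂ) (F : Polynomial (Polynomial ℂ)) (y : ℂ) :
    Polynomial.eval y
      (Polynomial.eval₂ (Polynomial.eval₂RingHom Polynomial.C p) q F)
    = ev2 F (p.eval y) (q.eval y) := by
  have h1 := Polynomial.hom_eval₂ F (Polynomial.eval₂RingHom Polynomial.C p)
      (Polynomial.evalRingHom y) q
  have h2 : (Polynomial.evalRingHom y).comp (Polynomial.eval₂RingHom Polynomial.C p)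
      = Polynomial.evalRingHom (p.eval y) := by
    apply Polynomial.ringHom_ext <;> simp
  simpa [ev2, h2] using h1

lemma line_zero (p q : Polynomial ℂ) (F : Polynomial (Polynomial ℂ))
    (h : ∀ t : ℝ, ev2 F (p.eval (t : ℂ)) (q.eval (t : ℂ)) = 0) (y : ℂ) :
    ev2 F (p.eval y) (q.eval y) = 0 := by
  have hpoly : Polynomial.eval₂ (Polynomial.eval₂RingHom Polynomial.C p) q F = 0 := by
    apply Polynomial.eq_zero_of_infinite_isRoot
    apply Set.Infinite.mono (s := Set.range ((↑) : ℝ → ℂ))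
    · rintro _ ⟨t, rfl⟩
      show Polynomial.IsRoot _ _
      rw [Polynomial.IsRoot, key_subst]
      exact h t
    · exact Set.infinite_range_of_injective Complex.ofReal_injective
  have := congrArg (Polynomial.eval y) hpoly
  rwa [key_subst, Polynomial.eval_zero] at this

lemma diag (F : Polynomial (Polynomial ℂ))
    (h : ∀ z : ℂ, ev2 F z (starRingEnd ℂ z) = 0) (z w : ℂ) : ev2 F z w = 0 := by
  have h1 : ∀ x : ℝ, ∀ y : ℂ, ev2 F ((x : ℂ) + I * y) ((x : ℂ) - I * y) = 0 := by
    intro x y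
    have := line_zero (Polynomial.C (x : ℂ) + Polynomial.C I * Polynomial.X)
      (Polynomial.C (x : ℂ) - Polynomial.C I * Polynomial.X) F ?_ y
    · simpa using this
    · intro t
      have hc : starRingEnd ℂ ((x : ℂ) + I * (t : ℂ)) = (x : ℂ) - I * (t : ℂ) := by
        simp [Complex.conj_ofReal]; ring
      simpa [hc] using h ((x : ℂ) + I * (t : ℂ))
  have h2 : ∀ y x : ℂ, ev2 F (x + I * y) (x - I * y) = 0 := by
    intro y x
    have := line_zero (Polynomial.X + Polynomial.C (I * y))
      (Polynomial.X - Polynomial.C (I * y)) F (fun t => by simpa [mul_comm] using h1 t y) x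
    simpa [mul_comm] using this
  have hz : (z + w) / 2 + I * ((z - w) / (2 * I)) = z := by
    field_simp
    ring
  have hw : (z + w) / 2 - I * ((z - w) / (2 * I)) = w := by
    field_simp
    ring
  have := h2 ((z - w) / (2 * I)) ((z + w) / 2)
  rwa [hz, hw] at this

/-- the polynomial depending only on the second variable -/
def inW (p : Polynomial ℂ) : Polynomial (Polynomial ℂ) :=
  p.map (Polynomial.C : ℂ →+* Polynomial ℂ)

lemma ev2_inW (p : Polynomial ℂ) (z w : ℂ) : ev2 (inW p) z w = p.eval w := by
  rw [ev2, inW, Polynomial.eval₂_map]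
  have : (Polynomial.evalRingHom z).comp (Polynomial.C : ℂ →+* Polynomial ℂ)
      = RingHom.id ℂ := by ext x; simp
  rw [this]
  rfl

/-- the big 2-variable polynomial encoding the curvature identity -/
def bigF (f g : Polynomial ℂ) : Polynomial (Polynomial ℂ) :=
  Polynomial.C (derivative f) * inW (cc (derivative f)) *
      (1 + Polynomial.C g * inW (cc g)) ^ 2 -
    Polynomial.C (derivative g) * inW (cc (derivative g)) *
      (1 + Polynomial.C f * inW (cc f)) ^ 2

lemma ev2_bigF (f g : Polynomial ℂ) (z w : ℂ) :
    ev2 (bigF f g) z w =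
      (derivative f).eval z * (cc (derivative f)).eval w *
          (1 + g.eval z * (cc g).eval w) ^ 2 -
        (derivative g).eval z * (cc (derivative g)).eval w *
          (1 + f.eval z * (cc f).eval w) ^ 2 := by
  simp only [bigF, ev2, Polynomial.eval₂_sub, Polynomial.eval₂_mul, Polynomial.eval₂_pow,
    Polynomial.eval₂_add, Polynomial.eval₂_one]
  rw [show (Polynomial.eval₂ (Polynomial.evalRingHom z) w (Polynomial.C (derivative f)))
    = (derivative f).eval z from Polynomial.eval₂_C _ _]
  rw [show (Polynomial.eval₂ (Polynomial.evalRingHom z) w (Polynomial.C (derivative g)))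
    = (derivative g).eval z from Polynomial.eval₂_C _ _]
  rw [show (Polynomial.eval₂ (Polynomial.evalRingHom z) w (Polynomial.C g))
    = g.eval z from Polynomial.eval₂_C _ _]
  rw [show (Polynomial.eval₂ (Polynomial.evalRingHom z) w (Polynomial.C f))
    = f.eval z from Polynomial.eval₂_C _ _]
  rw [show (Polynomial.eval₂ (Polynomial.evalRingHom z) w (inW (cc (derivative f))))
    = (cc (derivative f)).eval w from ev2_inW _ _ _]
  rw [show (Polynomial.eval₂ (Polynomial.evalRingHom z) w (inW (cc (derivative g))))
    = (cc (derivative g)).eval w from ev2_inW _ _ _]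
  rw [show (Polynomial.eval₂ (Polynomial.evalRingHom z) w (inW (cc g)))
    = (cc g).eval w from ev2_inW _ _ _]
  rw [show (Polynomial.eval₂ (Polynomial.evalRingHom z) w (inW (cc f)))
    = (cc f).eval w from ev2_inW _ _ _]

lemma abs_sq_cast (c : ℂ) : ((‖c‖ : ℝ) : ℂ) ^ 2 = c * starRingEnd ℂ c := by
  rw [← Complex.ofReal_pow, Complex.sq_norm]
  exact_mod_cast (Complex.mul_conj c).symm

end CurvAux
end CurvAux

set_option maxHeartbeats 4000000 in
open CurvAux in
/-- For complex polynomials `P`, `Q` of degree at least 2, the curvature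
functions `G_P` and `G_Q` coincide on all of `ℂ` iff `P = α·Q + β` for some
constants `α, β ∈ ℂ` with `|α| = 1`. -/
theorem curvature_eq_iff_unit_affine
    (P Q : Polynomial ℂ) (hP : 2 ≤ P.natDegree) (hQ : 2 ≤ Q.natDegree) :
    (∀ z : ℂ,
      -(‖(Polynomial.derivative (Polynomial.derivative P)).eval z‖) ^ 2 /
          (1 + (‖(Polynomial.derivative P).eval z‖) ^ 2) ^ 2
      =
      -(‖(Polynomial.derivative (Polynomial.derivative Q)).eval z‖) ^ 2 /
          (1 + (‖(Polynomial.derivative Q).eval z‖) ^ 2) ^ 2)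
    ↔ ∃ α β : ℂ, ‖α‖ = 1 ∧ P = Polynomial.C α * Q + Polynomial.C β := by
  constructor
  · intro h
    set f := Polynomial.derivative P with hf_def
    set g := Polynomial.derivative Q with hg_def
    clear_value f g
    have hfdeg : f.natDegree = P.natDegree - 1 := by
      rw [hf_def]; exact natDegree_derivative_eq' (by omega)
    have hgdeg : g.natDegree = Q.natDegree - 1 := by
      rw [hg_def]; exact natDegree_derivative_eq' (by omega)
    have hfpos : 0 < f.natDegree := by omega
    have hgpos : 0 < g.natDegree := by omega
    have hf0 : f ≠ 0 := fun hh => by rw [hh, Polynomial.natDegree_zero] at hfdeg; omega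
    have hg0 : g ≠ 0 := fun hh => by rw [hh, Polynomial.natDegree_zero] at hgdeg; omega
    have hf'0 : Polynomial.derivative f ≠ 0 := derivative_ne_zero' hfpos
    have hg'0 : Polynomial.derivative g ≠ 0 := derivative_ne_zero' hgpos
    have hf'deg : (Polynomial.derivative f).natDegree = f.natDegree - 1 :=
      natDegree_derivative_eq' hfpos
    have hg'deg : (Polynomial.derivative g).natDegree = g.natDegree - 1 :=
      natDegree_derivative_eq' hgpos
    -- Step A : two-variable identity
    have hdiag : ∀ z : ℂ, ev2 (bigF f g) z (starRingEnd ℂ z) = 0 := by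
      intro z
      rw [ev2_bigF, cc_eval, cc_eval, cc_eval, cc_eval]
      have hz := h z
      rw [div_eq_div_iff (by positivity) (by positivity)] at hz
      have hre : (‖(Polynomial.derivative f).eval z‖) ^ 2 *
            (1 + (‖g.eval z‖) ^ 2) ^ 2
          = (‖(Polynomial.derivative g).eval z‖) ^ 2 *
            (1 + (‖f.eval z‖) ^ 2) ^ 2 := by linarith
      have hC := congrArg (fun r : ℝ => (r : ℂ)) hre
      push_cast at hC
      rw [abs_sq_cast, abs_sq_cast, abs_sq_cast, abs_sq_cast] at hC
      linear_combination hC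
    have tw : ∀ z w : ℂ,
        (Polynomial.derivative f).eval z * (cc (Polynomial.derivative f)).eval w *
            (1 + g.eval z * (cc g).eval w) ^ 2
        = (Polynomial.derivative g).eval z * (cc (Polynomial.derivative g)).eval w *
            (1 + f.eval z * (cc f).eval w) ^ 2 := by
      intro z w
      have := diag _ hdiag z w
      rw [ev2_bigF] at this
      linear_combination this
    -- Step B : equal degrees
    obtain ⟨w₀, hw₀⟩ : ∃ w, (cc (Polynomial.derivative f) * cc (Polynomial.derivative g) *
        cc f * cc g).eval w ≠ 0 := by
      by_contra hcon
      push_neg at hcon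
      have hpr : (cc (Polynomial.derivative f) * cc (Polynomial.derivative g) *
          cc f * cc g) ≠ 0 := by
        apply mul_ne_zero (mul_ne_zero (mul_ne_zero _ _) _) <;> exact cc_ne_zero ‹_›
      apply hpr
      apply Polynomial.eq_zero_of_infinite_isRoot
      have : {x | Polynomial.IsRoot _ x} = Set.univ := Set.eq_univ_of_forall hcon
      rw [this]
      exact Set.infinite_univ
    simp only [Polynomial.eval_mul, mul_ne_zero_iff] at hw₀
    obtain ⟨⟨⟨hw1, hw2⟩, hw3⟩, hw4⟩ := hw₀
    have hfun1 : (Polynomial.C ((cc (Polynomial.derivative f)).eval w₀) *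
        ((1 + Polynomial.C ((cc g).eval w₀) * g) ^ 2 * Polynomial.derivative f) : Polynomial ℂ)
        = Polynomial.C ((cc (Polynomial.derivative g)).eval w₀) *
        ((1 + Polynomial.C ((cc f).eval w₀) * f) ^ 2 * Polynomial.derivative g) := by
      apply Polynomial.funext
      intro z
      simp only [Polynomial.eval_mul, Polynomial.eval_pow, Polynomial.eval_add,
        Polynomial.eval_one, Polynomial.eval_C]
      linear_combination tw z w₀
    have hdeg1 := congrArg Polynomial.natDegree hfun1
    rw [Polynomial.natDegree_C_mul hw1, Polynomial.natDegree_C_mul hw2,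
      Polynomial.natDegree_mul (pow_ne_zero _ (one_add_ne_zero hgpos hw4)) hf'0,
      Polynomial.natDegree_mul (pow_ne_zero _ (one_add_ne_zero hfpos hw3)) hg'0,
      Polynomial.natDegree_pow, Polynomial.natDegree_pow,
      natDegree_one_add hgpos hw4, natDegree_one_add hfpos hw3, hf'deg, hg'deg] at hdeg1
    have hmn : g.natDegree = f.natDegree := by omega
    -- Step C : leading-coefficient polynomial identity
    set N := f.natDegree with hN
    set DD := 2 * N + (N - 1) with hDD
    clear_value N DD
    have coeffD : ∀ (c1 c2 : ℂ) (p q : Polynomial ℂ), p.natDegree = N →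
        q.natDegree = N - 1 → p ≠ 0 → q ≠ 0 →
        (Polynomial.C c1 * ((1 + Polynomial.C c2 * p) ^ 2 * q)).coeff DD
          = c1 * (c2 ^ 2 * (p.leadingCoeff ^ 2 * q.leadingCoeff)) := by
      intro c1 c2 p q hp hq hp0 hq0
      have expand : (1 + Polynomial.C c2 * p) ^ 2 * q
          = q + Polynomial.C (2 * c2) * (p * q) + Polynomial.C (c2 ^ 2) * (p ^ 2 * q) := by
        rw [map_mul, map_pow, map_ofNat]
        ring
      have e1 : q.coeff DD = 0 :=
        Polynomial.coeff_eq_zero_of_natDegree_lt (by omega)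
      have e2 : (p * q).coeff DD = 0 := by
        apply Polynomial.coeff_eq_zero_of_natDegree_lt
        calc (p * q).natDegree ≤ p.natDegree + q.natDegree := Polynomial.natDegree_mul_le
          _ < DD := by omega
      have e3 : (p ^ 2 * q).coeff DD = p.leadingCoeff ^ 2 * q.leadingCoeff := by
        have hnd : (p ^ 2 * q).natDegree = DD := by
          rw [Polynomial.natDegree_mul (pow_ne_zero _ hp0) hq0, Polynomial.natDegree_pow]
          omega
        rw [← hnd, Polynomial.coeff_natDegree, Polynomial.leadingCoeff_mul,
          Polynomial.leadingCoeff_pow]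
      rw [expand, Polynomial.coeff_C_mul, Polynomial.coeff_add, Polynomial.coeff_add,
        Polynomial.coeff_C_mul, Polynomial.coeff_C_mul, e1, e2, e3]
      ring
    have star2 : ∀ w : ℂ,
        (cc (Polynomial.derivative f)).eval w *
          (((cc g).eval w) ^ 2 * (g.leadingCoeff ^ 2 * (Polynomial.derivative f).leadingCoeff))
        = (cc (Polynomial.derivative g)).eval w *
          (((cc f).eval w) ^ 2 * (f.leadingCoeff ^ 2 * (Polynomial.derivative g).leadingCoeff)) := by
      intro w
      have hfunw : (Polynomial.C ((cc (Polynomial.derivative f)).eval w) *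
          ((1 + Polynomial.C ((cc g).eval w) * g) ^ 2 * Polynomial.derivative f) : Polynomial ℂ)
          = Polynomial.C ((cc (Polynomial.derivative g)).eval w) *
          ((1 + Polynomial.C ((cc f).eval w) * f) ^ 2 * Polynomial.derivative g) := by
        apply Polynomial.funext
        intro z
        simp only [Polynomial.eval_mul, Polynomial.eval_pow, Polynomial.eval_add,
          Polynomial.eval_one, Polynomial.eval_C]
        linear_combination tw z w
      have hc := congrArg (fun r : Polynomial ℂ => r.coeff DD) hfunw
      rw [coeffD _ _ g (Polynomial.derivative f) hmn (by omega) hg0 hf'0,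
        coeffD _ _ f (Polynomial.derivative g) hN.symm (by omega) hf0 hg'0] at hc
      linear_combination hc
    have star2poly : cc (Polynomial.derivative f) *
          ((cc g) ^ 2 * Polynomial.C (g.leadingCoeff ^ 2 * (Polynomial.derivative f).leadingCoeff))
        = cc (Polynomial.derivative g) *
          ((cc f) ^ 2 * Polynomial.C (f.leadingCoeff ^ 2 * (Polynomial.derivative g).leadingCoeff)) := by
      apply Polynomial.funext
      intro w
      simp only [Polynomial.eval_mul, Polynomial.eval_pow, Polynomial.eval_C]
      exact star2 w
    set u := starRingEnd ℂ (g.leadingCoeff ^ 2 * (Polynomial.derivative f).leadingCoeff) with hu_def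
    set v := starRingEnd ℂ (f.leadingCoeff ^ 2 * (Polynomial.derivative g).leadingCoeff) with hv_def
    clear_value u v
    have hu : u ≠ 0 := by
      simp only [hu_def, map_mul, map_pow]
      exact mul_ne_zero (pow_ne_zero _ (by simpa using Polynomial.leadingCoeff_ne_zero.mpr hg0))
        (by simpa using Polynomial.leadingCoeff_ne_zero.mpr hf'0)
    have hv : v ≠ 0 := by
      simp only [hv_def, map_mul, map_pow]
      exact mul_ne_zero (pow_ne_zero _ (by simpa using Polynomial.leadingCoeff_ne_zero.mpr hf0))
        (by simpa using Polynomial.leadingCoeff_ne_zero.mpr hg'0)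
    have star3 : Polynomial.derivative f * (g ^ 2 * Polynomial.C u)
        = Polynomial.derivative g * (f ^ 2 * Polynomial.C v) := by
      have hmap := congrArg (Polynomial.map (starRingEnd ℂ)) star2poly
      simp only [Polynomial.map_mul, Polynomial.map_pow, Polynomial.map_C] at hmap
      have c1 : (cc (Polynomial.derivative f)).map (starRingEnd ℂ) = Polynomial.derivative f :=
        cc_cc _
      have c2 : (cc (Polynomial.derivative g)).map (starRingEnd ℂ) = Polynomial.derivative g :=
        cc_cc _
      have c3 : (cc f).map (starRingEnd ℂ) = f := cc_cc _
      have c4 : (cc g).map (starRingEnd ℂ) = g := cc_cc _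
      rw [c1, c2, c3, c4] at hmap
      rw [hu_def, hv_def]
      exact hmap
    -- Step D : f is a constant multiple of g
    set D0 := Polynomial.C u * g - Polynomial.C v * f with hD0_def
    clear_value D0
    have hder : Polynomial.derivative D0 * (f * g) = D0 * Polynomial.derivative (f * g) := by
      rw [hD0_def, Polynomial.derivative_sub, Polynomial.derivative_C_mul,
        Polynomial.derivative_C_mul, Polynomial.derivative_mul]
      linear_combination (-1 : Polynomial ℂ) * star3
    have hfgpos : 0 < (f * g).natDegree := by
      rw [Polynomial.natDegree_mul hf0 hg0]; omega
    have hD0z : D0 = 0 := by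
      by_contra hne
      rcases Nat.eq_zero_or_pos D0.natDegree with h0 | hpos
      · have hd0 : Polynomial.derivative D0 = 0 := Polynomial.derivative_of_natDegree_zero h0
        rw [hd0, zero_mul] at hder
        rcases mul_eq_zero.mp hder.symm with hh | hh
        · exact hne hh
        · exact derivative_ne_zero' hfgpos hh
      · have hlc := congrArg Polynomial.leadingCoeff hder
        simp only [Polynomial.leadingCoeff_mul, leadingCoeff_derivative' hpos,
          leadingCoeff_derivative' hfgpos] at hlc
        have hlcD : D0.leadingCoeff ≠ 0 := Polynomial.leadingCoeff_ne_zero.mpr hne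
        have hlcfg : (f * g).leadingCoeff ≠ 0 :=
          Polynomial.leadingCoeff_ne_zero.mpr (mul_ne_zero hf0 hg0)
        have key : ((D0.natDegree : ℂ) - ((f * g).natDegree : ℂ)) *
            (D0.leadingCoeff * (f * g).leadingCoeff) = 0 := by
          simp only [Polynomial.leadingCoeff_mul]
          linear_combination hlc
        have hcast : (D0.natDegree : ℂ) = ((f * g).natDegree : ℂ) := by
          rcases mul_eq_zero.mp key with hk | hk
          · exact sub_eq_zero.mp hk
          · exact absurd hk (mul_ne_zero hlcD hlcfg)
        have hdeq : D0.natDegree = (f * g).natDegree := Nat.cast_injective hcast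
        have hle : D0.natDegree ≤ max (Polynomial.C u * g).natDegree
            (Polynomial.C v * f).natDegree := by
          rw [hD0_def]; exact Polynomial.natDegree_sub_le _ _
        rw [Polynomial.natDegree_C_mul hu, Polynomial.natDegree_C_mul hv, hmn, ← hN,
          max_self] at hle
        rw [Polynomial.natDegree_mul hf0 hg0] at hdeq
        omega
    set μ := v⁻¹ * u with hμ_def
    have hμ0 : μ ≠ 0 := by rw [hμ_def]; exact mul_ne_zero (inv_ne_zero hv) hu
    have hmu : f = Polynomial.C μ * g := by
      have hvf : Polynomial.C v * f = Polynomial.C u * g := by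
        rw [hD0_def] at hD0z
        exact (sub_eq_zero.mp hD0z).symm
      calc f = Polynomial.C v⁻¹ * (Polynomial.C v * f) := by
              rw [← mul_assoc, ← Polynomial.C_mul, inv_mul_cancel₀ hv, Polynomial.C_1, one_mul]
        _ = Polynomial.C v⁻¹ * (Polynomial.C u * g) := by rw [hvf]
        _ = Polynomial.C μ * g := by rw [← mul_assoc, ← Polynomial.C_mul, hμ_def]
    clear_value μ
    -- Step E : |μ| = 1
    have hfeval : ∀ z : ℂ, f.eval z = μ * g.eval z := fun z => by
      rw [hmu, Polynomial.eval_mul, Polynomial.eval_C]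
    have hf'eval : ∀ z : ℂ, (Polynomial.derivative f).eval z
        = μ * (Polynomial.derivative g).eval z := fun z => by
      rw [hmu, Polynomial.derivative_C_mul, Polynomial.eval_mul, Polynomial.eval_C]
    set t := ‖μ‖ with ht_def
    clear_value t
    have htpos : 0 < t := by rw [ht_def]; exact norm_pos_iff.mpr hμ0
    have hkey : ∀ z : ℂ, (Polynomial.derivative g).eval z ≠ 0 →
        (t - 1) * (1 - t * (‖g.eval z‖) ^ 2) = 0 := by
      intro z hz
      have hz2 := h z
      rw [div_eq_div_iff (by positivity) (by positivity)] at hz2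
      set s := ‖g.eval z‖ with hs_def
      set G := ‖(Polynomial.derivative g).eval z‖ with hG_def
      clear_value s G
      have hG : 0 < G := by rw [hG_def]; exact norm_pos_iff.mpr hz
      have habs1 : ‖(Polynomial.derivative f).eval z‖ = t * G := by
        rw [hf'eval z, norm_mul, ← hG_def, ← ht_def]
      have habs2 : ‖f.eval z‖ = t * s := by
        rw [hfeval z, norm_mul, ← hs_def, ← ht_def]
      rw [habs1, habs2] at hz2
      have hsq : (t * (1 + s ^ 2)) ^ 2 = (1 + t ^ 2 * s ^ 2) ^ 2 := by
        have h3 : G ^ 2 * (t * (1 + s ^ 2)) ^ 2 = G ^ 2 * (1 + t ^ 2 * s ^ 2) ^ 2 := by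
          linear_combination -hz2
        exact mul_left_cancel₀ (by positivity) h3
      have hbase : t * (1 + s ^ 2) = 1 + t ^ 2 * s ^ 2 := by
        have hfac : (t * (1 + s ^ 2) - (1 + t ^ 2 * s ^ 2)) *
            (t * (1 + s ^ 2) + (1 + t ^ 2 * s ^ 2)) = 0 := by linear_combination hsq
        rcases mul_eq_zero.mp hfac with h' | h'
        · linarith
        · nlinarith [htpos, sq_nonneg s, sq_nonneg (t * s)]
      linear_combination hbase
    have ht1 : t = 1 := by
      by_contra hne1
      set R : Polynomial ℂ := Polynomial.C (t : ℂ) * (g * cc g) - 1 with hR_def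
      have hR0 : R = 0 := by
        apply Polynomial.eq_zero_of_infinite_isRoot
        apply Set.Infinite.mono
          (s := Set.range ((↑) : ℝ → ℂ) \ {x | Polynomial.IsRoot (Polynomial.derivative g) x})
        · rintro zz ⟨⟨x, rfl⟩, hnr⟩
          have hgz : (Polynomial.derivative g).eval (x : ℂ) ≠ 0 := hnr
          have hts : t * (‖g.eval (x : ℂ)‖) ^ 2 = 1 := by
            have := hkey (x : ℂ) hgz
            rcases mul_eq_zero.mp this with h' | h'
            · exact absurd (by linarith : t = 1) hne1
            · linarith
          show R.eval (x : ℂ) = 0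
          have hcx : (starRingEnd ℂ) ((x : ℝ) : ℂ) = ((x : ℝ) : ℂ) := Complex.conj_ofReal x
          have hccg : (cc g).eval ((x : ℝ) : ℂ) = starRingEnd ℂ (g.eval ((x : ℝ) : ℂ)) := by
            have := cc_eval g ((x : ℝ) : ℂ)
            rwa [hcx] at this
          rw [hR_def]
          simp only [Polynomial.eval_sub, Polynomial.eval_mul, Polynomial.eval_C,
            Polynomial.eval_one, hccg]
          rw [← abs_sq_cast]
          have : ((t : ℝ) : ℂ) * (((‖g.eval ((x : ℝ) : ℂ)‖) : ℝ) : ℂ) ^ 2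
              = (((t * (‖g.eval ((x : ℝ) : ℂ)‖) ^ 2 : ℝ)) : ℂ) := by push_cast; ring
          rw [this, hts]
          norm_num
        · apply Set.Infinite.diff
          · exact Set.infinite_range_of_injective Complex.ofReal_injective
          · exact Polynomial.finite_setOf_isRoot hg'0
      rw [hR_def] at hR0
      have hcoeff := congrArg (fun r : Polynomial ℂ => r.coeff (2 * N)) hR0
      simp only [Polynomial.coeff_zero, Polynomial.coeff_sub, Polynomial.coeff_C_mul] at hcoeff
      have hgcc : (g * cc g).coeff (2 * N) = g.leadingCoeff * starRingEnd ℂ g.leadingCoeff := by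
        have hnd : (g * cc g).natDegree = 2 * N := by
          rw [Polynomial.natDegree_mul hg0 (cc_ne_zero hg0), natDegree_cc, hmn]
          omega
        rw [← hnd, Polynomial.coeff_natDegree, Polynomial.leadingCoeff_mul, leadingCoeff_cc]
      have hone : (1 : Polynomial ℂ).coeff (2 * N) = 0 := by
        rw [Polynomial.coeff_one]
        simp only [if_neg (by omega : ¬(2 * N = 0))]
      rw [hgcc, hone, sub_zero] at hcoeff
      have : (t : ℂ) * (g.leadingCoeff * starRingEnd ℂ g.leadingCoeff) ≠ 0 := by
        apply mul_ne_zero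
        · exact_mod_cast htpos.ne'
        · exact mul_ne_zero (Polynomial.leadingCoeff_ne_zero.mpr hg0)
            (by simpa using Polynomial.leadingCoeff_ne_zero.mpr hg0)
      exact this hcoeff
    -- Step F : conclude
    refine ⟨μ, (P - Polynomial.C μ * Q).coeff 0, by rw [← ht_def]; exact ht1, ?_⟩
    have hd : Polynomial.derivative (P - Polynomial.C μ * Q) = 0 := by
      rw [Polynomial.derivative_sub, Polynomial.derivative_C_mul, ← hf_def, ← hg_def, hmu]
      ring
    have := Polynomial.eq_C_of_derivative_eq_zero hd
    linear_combination this
  · rintro ⟨α, β, hα, rfl⟩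
    intro z
    simp only [Polynomial.derivative_add, Polynomial.derivative_C, add_zero,
      Polynomial.derivative_C_mul, Polynomial.eval_mul, Polynomial.eval_C, map_mul, norm_mul, hα, one_mul]
end

section
/- Let f : ℂ → ℂ be holomorphic on an open set Ω ⊆ ℂ with real part u(x,y) = Re f(x+iy) and imaginary part v(x,y) = Im f(x+iy), and let t ∈ ℝ. Define w_t(x,y) = cos(t)·u(x,y) − sin(t)·v(x,y). Then w_t = Re(e^{it}·f(x+iy)) and at every point of Ω the Gaussian curvature expression of the graph of w_t equals that of the graph of u: ((w_t)_xx·(w_t)_yy − (w_t)_xy²)/(1 + (w_t)_x² + (w_t)_y²)² = (u_xx·u_yy − u_xy²)/(1 + u_x² + u_y²)². -/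
open Complex

lemma fderiv_re_eval (h : ℂ → ℂ) (x y : ℝ) (hh : DifferentiableAt ℂ h (x + y * I))
    (a b : ℝ) :
    fderiv ℝ (fun p : ℝ × ℝ => (h (p.1 + p.2 * I)).re) (x, y) (a, b)
      = (deriv h (x + y * I) * (a + b * I)).re := by
  have hL : HasFDerivAt (fun p : ℝ × ℝ => ((p.1 : ℂ) + p.2 * I))
      (Complex.equivRealProdCLM.symm : (ℝ × ℝ) →L[ℝ] ℂ) (x, y) := by
    have heq : (fun p : ℝ × ℝ => ((p.1 : ℂ) + p.2 * I)) = ⇑(Complex.equivRealProdCLM.symm) := by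
      funext p; rw [Complex.equivRealProdCLM_symm_apply]
    rw [heq]
    exact (Complex.equivRealProdCLM.symm).hasFDerivAt
  have hd : HasFDerivAt h ((ContinuousLinearMap.smulRight (1 : ℂ →L[ℂ] ℂ)
      (deriv h (x + y * I))).restrictScalars ℝ) (x + y * I) :=
    (hh.hasDerivAt.hasFDerivAt).restrictScalars ℝ
  have hc := hd.comp (x, y) hL
  have hre := Complex.reCLM.hasFDerivAt.comp (x, y) hc
  have hre' : HasFDerivAt (fun p : ℝ × ℝ => (h (p.1 + p.2 * I)).re)
      (Complex.reCLM.comp (((ContinuousLinearMap.smulRight (1 : ℂ →L[ℂ] ℂ)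
        (deriv h (x + y * I))).restrictScalars ℝ).comp
        (Complex.equivRealProdCLM.symm : (ℝ × ℝ) →L[ℝ] ℂ))) (x, y) := hre
  rw [hre'.fderiv]
  simp [Complex.equivRealProdCLM_symm_apply, smul_eq_mul]
  ring_nf

lemma fderiv2_re_eval (Ω : Set ℂ) (hΩ : IsOpen Ω) (h : ℂ → ℂ)
    (hh : ∀ z ∈ Ω, DifferentiableAt ℂ h z)
    (hh' : ∀ z ∈ Ω, DifferentiableAt ℂ (deriv h) z)
    (U : ℝ × ℝ → ℝ) (hU : ∀ x y : ℝ, U (x, y) = (h (x + y * I)).re)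
    (x y : ℝ) (hz : (x : ℂ) + y * I ∈ Ω) (a b a' b' : ℝ) :
    fderiv ℝ (fun q => fderiv ℝ U q (a, b)) (x, y) (a', b')
      = (deriv (deriv h) (x + y * I) * (a + b * I) * (a' + b' * I)).re := by
  have hUe : U = fun p : ℝ × ℝ => (h (p.1 + p.2 * I)).re := by
    funext p; exact hU p.1 p.2
  have hS : IsOpen {p : ℝ × ℝ | ((p.1 : ℂ) + p.2 * I) ∈ Ω} := by
    have : Continuous fun p : ℝ × ℝ => ((p.1 : ℂ) + p.2 * I) := by continuity
    exact hΩ.preimage this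
  have hev : (fun q : ℝ × ℝ => fderiv ℝ U q (a, b)) =ᶠ[nhds ((x : ℝ), y)]
      (fun q : ℝ × ℝ => ((fun z => deriv h z * (a + b * I)) ((q.1 : ℂ) + q.2 * I)).re) := by
    filter_upwards [hS.mem_nhds (by exact hz)] with q hq
    rw [hUe]
    exact fderiv_re_eval h q.1 q.2 (hh _ hq) a b
  rw [hev.fderiv_eq]
  rw [fderiv_re_eval (fun z => deriv h z * (a + b * I)) x y
    ((hh' _ hz).mul_const _) a' b']
  rw [deriv_mul_const (hh' _ hz)]

/-- For `f` holomorphic on `Ω` with real and imaginary parts `u`, `v`, the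
function `w_t = cos t · u − sin t · v` equals `Re (e^{it} f)` and its graph
has the same Gaussian curvature as the graph of `u` at every point of `Ω`. -/
theorem loop_of_harmonic_functions_same_curvature
    (Ω : Set ℂ) (hΩ : IsOpen Ω) (f : ℂ → ℂ)
    (hf : ∀ z ∈ Ω, DifferentiableAt ℂ f z)
    (u v : ℝ × ℝ → ℝ)
    (hu : ∀ x y : ℝ, u (x, y) = (f (x + y * Complex.I)).re)
    (hv : ∀ x y : ℝ, v (x, y) = (f (x + y * Complex.I)).im)
    (t : ℝ) (w : ℝ × ℝ → ℝ)
    (hw : ∀ p : ℝ × ℝ, w p = Real.cos t * u p - Real.sin t * v p) :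
    (∀ x y : ℝ,
      w (x, y) = (Complex.exp (t * Complex.I) * f (x + y * Complex.I)).re) ∧
    ∀ x y : ℝ, (x + y * Complex.I) ∈ Ω →
      (fderiv ℝ (fun q => fderiv ℝ w q (1, 0)) (x, y) (1, 0) *
         fderiv ℝ (fun q => fderiv ℝ w q (0, 1)) (x, y) (0, 1) -
       (fderiv ℝ (fun q => fderiv ℝ w q (1, 0)) (x, y) (0, 1)) ^ 2) /
        (1 + (fderiv ℝ w (x, y) (1, 0)) ^ 2 + (fderiv ℝ w (x, y) (0, 1)) ^ 2) ^ 2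
      =
      (fderiv ℝ (fun q => fderiv ℝ u q (1, 0)) (x, y) (1, 0) *
         fderiv ℝ (fun q => fderiv ℝ u q (0, 1)) (x, y) (0, 1) -
       (fderiv ℝ (fun q => fderiv ℝ u q (1, 0)) (x, y) (0, 1)) ^ 2) /
        (1 + (fderiv ℝ u (x, y) (1, 0)) ^ 2 + (fderiv ℝ u (x, y) (0, 1)) ^ 2) ^ 2 := by
  set E : ℂ := Complex.exp (t * Complex.I) with hE
  have hEre : E.re = Real.cos t := by
    rw [hE, Complex.exp_mul_I]; simp [Complex.cos_ofReal_re]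
  have hEim : E.im = Real.sin t := by
    rw [hE, Complex.exp_mul_I]; simp [Complex.sin_ofReal_re]
  -- part 1
  have part1 : ∀ x y : ℝ, w (x, y) = (E * f (x + y * Complex.I)).re := by
    intro x y
    rw [hw, hu, hv, Complex.mul_re, hEre, hEim]
  refine ⟨part1, ?_⟩
  intro x y hz
  set g : ℂ → ℂ := fun z => E * f z with hgdef
  have hg : ∀ z ∈ Ω, DifferentiableAt ℂ g z := fun z hz => (hf z hz).const_mul E
  -- analyticity: derivatives are differentiable on Ω
  have hfa : AnalyticOnNhd ℂ f Ω := fun z hz =>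
    DifferentiableOn.analyticAt (fun w hw => (hf w hw).differentiableWithinAt)
      (hΩ.mem_nhds hz)
  have hf' : ∀ z ∈ Ω, DifferentiableAt ℂ (deriv f) z := fun z hz =>
    ((hfa.deriv) z hz).differentiableAt
  have hgd : ∀ z ∈ Ω, deriv g z = E * deriv f z := fun z hz =>
    deriv_const_mul E (hf z hz)
  have hg' : ∀ z ∈ Ω, DifferentiableAt ℂ (deriv g) z := by
    intro z hz
    have hev : (fun w => E * deriv f w) =ᶠ[nhds z] deriv g := by
      filter_upwards [hΩ.mem_nhds hz] with q hq using (hgd q hq).symm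
    exact ((hf' z hz).const_mul E).congr_of_eventuallyEq hev.symm
  have hgdd : deriv (deriv g) (x + y * Complex.I) =
      E * deriv (deriv f) (x + y * Complex.I) := by
    have hev : deriv g =ᶠ[nhds ((x : ℂ) + y * Complex.I)] (fun w => E * deriv f w) := by
      filter_upwards [hΩ.mem_nhds hz] with q hq using hgd q hq
    rw [hev.deriv_eq, deriv_const_mul E (hf' _ hz)]
  have hw' : ∀ x y : ℝ, w (x, y) = (g (x + y * Complex.I)).re := part1
  have hwfun : w = fun p : ℝ × ℝ => (g (p.1 + p.2 * I)).re := by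
    funext p; exact hw' p.1 p.2
  have hufun : u = fun p : ℝ × ℝ => (f (p.1 + p.2 * I)).re := by
    funext p; exact hu p.1 p.2
  -- second derivatives
  have w11 := fderiv2_re_eval Ω hΩ g hg hg' w hw' x y hz 1 0 1 0
  have w12 := fderiv2_re_eval Ω hΩ g hg hg' w hw' x y hz 1 0 0 1
  have w22 := fderiv2_re_eval Ω hΩ g hg hg' w hw' x y hz 0 1 0 1
  have u11 := fderiv2_re_eval Ω hΩ f hf hf' u hu x y hz 1 0 1 0
  have u12 := fderiv2_re_eval Ω hΩ f hf hf' u hu x y hz 1 0 0 1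
  have u22 := fderiv2_re_eval Ω hΩ f hf hf' u hu x y hz 0 1 0 1
  -- first derivatives
  have w1 : fderiv ℝ w (x, y) (1, 0) = (deriv g (x + y * I) * ((1:ℝ) + (0:ℝ) * I)).re := by
    rw [hwfun]; exact fderiv_re_eval g x y (hg _ hz) 1 0
  have w2 : fderiv ℝ w (x, y) (0, 1) = (deriv g (x + y * I) * ((0:ℝ) + (1:ℝ) * I)).re := by
    rw [hwfun]; exact fderiv_re_eval g x y (hg _ hz) 0 1
  have u1 : fderiv ℝ u (x, y) (1, 0) = (deriv f (x + y * I) * ((1:ℝ) + (0:ℝ) * I)).re := by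
    rw [hufun]; exact fderiv_re_eval f x y (hf _ hz) 1 0
  have u2 : fderiv ℝ u (x, y) (0, 1) = (deriv f (x + y * I) * ((0:ℝ) + (1:ℝ) * I)).re := by
    rw [hufun]; exact fderiv_re_eval f x y (hf _ hz) 0 1
  rw [w11, w12, w22, u11, u12, u22, w1, w2, u1, u2, hgdd, hgd _ hz]
  set A := deriv (deriv f) (x + y * Complex.I)
  set B := deriv f (x + y * Complex.I)
  have hcs : Real.cos t ^ 2 + Real.sin t ^ 2 = 1 := Real.cos_sq_add_sin_sq t
  simp only [Complex.ofReal_one, Complex.ofReal_zero, zero_mul, one_mul, add_zero, zero_add,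
    mul_one]
  congr 1
  · simp only [Complex.mul_re, Complex.mul_im, Complex.I_re, Complex.I_im, hEre, hEim,
      Complex.one_re, Complex.one_im]
    ring_nf
    linear_combination (-(A.re ^ 2) - A.im ^ 2) * hcs
  · simp only [Complex.mul_re, Complex.mul_im, Complex.I_re, Complex.I_im, hEre, hEim,
      Complex.one_re, Complex.one_im]
    ring_nf
    linear_combination (2 * (B.re ^ 2 + B.im ^ 2) +
      (B.re ^ 2 + B.im ^ 2) ^ 2 * (Real.cos t ^ 2 + Real.sin t ^ 2 + 1)) * hcs
end

section
/- Let n ≥ 2 be a natural number and let P₀ be a complex polynomial of degree n. Consider the coefficient space ℂ^{n+1} (maps Fin (n+1) → ℂ with its product topology), where a coefficient vector c corresponds to the polynomial p_c(z) = Σ_{i=0}^{n} c_i z^i, and let S ⊆ ℂ^{n+1} be the subspace S = { c : for every z ∈ ℂ, −|p_c''(z)|²/(1 + |p_c'(z)|²)² = −|P₀''(z)|²/(1 + |P₀'(z)|²)² }, equipped with the subspace topology. Then the fundamental group of S (at the basepoint given by the coefficient vector of P₀, which lies in S) is not trivial, i.e. it is not a subsingleton. -/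
open Complex Polynomial Filter Topology unitInterval

/-- A continuous function whose exponential is pointwise-constant on a preconnected
space is constant. -/
lemma eq_of_exp_comp_const {X : Type*} [TopologicalSpace X] [PreconnectedSpace X]
    {f : X → ℂ} (hf : Continuous f)
    (hexp : ∀ x y : X, Complex.exp (f x) = Complex.exp (f y)) (a b : X) : f a = f b := by
  by_contra hne
  have h2pi : (2 * (Real.pi : ℂ) * Complex.I) ≠ 0 := by
    simp [Real.pi_ne_zero, Complex.I_ne_zero, Complex.ofReal_ne_zero]
  set g : X → ℝ := fun x => ((f x - f a) / (2 * (Real.pi : ℂ) * Complex.I)).re with hg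
  have hgc : Continuous g :=
    Complex.continuous_re.comp (Continuous.div_const (hf.sub continuous_const) _)
  have hdiff : ∀ x : X, ∃ m : ℤ, f x - f a = m * (2 * (Real.pi : ℂ) * Complex.I) := by
    intro x
    obtain ⟨m, hm⟩ := Complex.exp_eq_exp_iff_exists_int.mp (hexp x a)
    exact ⟨m, by rw [hm]; push_cast; ring⟩
  have hgval : ∀ (x : X) (m : ℤ), f x - f a = m * (2 * (Real.pi : ℂ) * Complex.I) →
      g x = m := by
    intro x m hm
    simp only [hg, hm, mul_div_assoc, div_self h2pi, mul_one, Complex.intCast_re]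
  have hint : ∀ x : X, ∃ m : ℤ, g x = m := fun x => by
    obtain ⟨m, hm⟩ := hdiff x; exact ⟨m, hgval x m hm⟩
  have hga : g a = 0 := by simp [hg]
  obtain ⟨mb, hmbd⟩ := hdiff b
  have hmb : g b = mb := hgval b mb hmbd
  have hgb : g b ≠ 0 := by
    intro h0
    apply hne
    have hmb0 : (mb : ℝ) = 0 := by rw [← hmb, h0]
    have : mb = 0 := by exact_mod_cast hmb0
    rw [this] at hmbd
    simp only [Int.cast_zero, zero_mul] at hmbd
    exact (sub_eq_zero.mp hmbd).symm
  have hmbne : mb ≠ 0 := fun h => hgb (by rw [hmb, h]; simp)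
  have hexists : ∃ x : X, g x = 1/2 ∨ g x = -(1/2) := by
    rcases lt_or_gt_of_ne hgb with hlt | hgt
    · have hmblt : mb ≤ -1 := by
        have : (mb : ℝ) < 0 := by rw [← hmb]; exact hlt
        have : mb < 0 := by exact_mod_cast this
        omega
      have hb1 : g b ≤ -1 := by
        rw [hmb]; exact_mod_cast hmblt
      obtain ⟨x, hx⟩ := intermediate_value_univ b a hgc
        (show (-(1/2) : ℝ) ∈ Set.Icc (g b) (g a) by
          constructor
          · linarith
          · rw [hga]; norm_num)
      exact ⟨x, Or.inr hx⟩
    · have hmbgt : 1 ≤ mb := by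
        have : (0:ℝ) < mb := by rw [← hmb]; exact hgt
        have : 0 < mb := by exact_mod_cast this
        omega
      have hb1 : (1:ℝ) ≤ g b := by rw [hmb]; exact_mod_cast hmbgt
      obtain ⟨x, hx⟩ := intermediate_value_univ a b hgc
        (show ((1/2) : ℝ) ∈ Set.Icc (g a) (g b) by
          constructor
          · rw [hga]; norm_num
          · linarith)
      exact ⟨x, Or.inl hx⟩
  obtain ⟨x, hx⟩ := hexists
  obtain ⟨m, hm⟩ := hint x
  rcases hx with h | h <;> rw [hm] at h
  · have h1 : (2*m : ℝ) = 1 := by push_cast; linarith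
    have : (2*m : ℤ) = 1 := by exact_mod_cast h1
    omega
  · have h1 : (2*m : ℝ) = -1 := by push_cast; linarith
    have : (2*m : ℤ) = -1 := by exact_mod_cast h1
    omega

open Complex Polynomial Filter Topology unitInterval

/-- Every nonvanishing continuous map on the unit square admits a continuous logarithm. -/
lemma exists_exp_lift (H : C(I × I, ℂ)) (hH : ∀ x, H x ≠ 0) :
    ∃ L : I × I → ℂ, Continuous L ∧ ∀ x, Complex.exp (L x) = H x := by
  -- minimum of |H|
  obtain ⟨x₀, -, hx₀⟩ : ∃ x₀ ∈ (Set.univ : Set (I × I)),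
      IsMinOn (fun x => norm (H x)) Set.univ x₀ :=
    isCompact_univ.exists_isMinOn Set.univ_nonempty
      ((continuous_norm.comp H.continuous).continuousOn)
  set ε : ℝ := norm (H x₀) with hε
  have hε0 : 0 < ε := by
    rw [hε]; exact norm_pos_iff.mpr (hH x₀)
  have hmin : ∀ y, ε ≤ norm (H y) := fun y => hx₀ (Set.mem_univ y)
  -- uniform continuity
  obtain ⟨δ, hδ0, hδ⟩ := Metric.uniformContinuous_iff.mp
    (CompactSpace.uniformContinuous_of_continuous H.continuous) ε hε0
  obtain ⟨N, hN⟩ := exists_nat_gt (1/δ)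
  have hN0 : 0 < (N:ℝ) := lt_of_le_of_lt (le_of_lt (by positivity)) hN
  have hNδ : 1/(N:ℝ) < δ := by
    rw [div_lt_iff₀ hN0]
    rw [div_lt_iff₀ hδ0] at hN
    linarith [hN]
  -- the scaling factors
  set r : ℕ → ℝ := fun k => min ((k:ℝ)/N) 1 with hr
  have hr_mem : ∀ k, r k ∈ I := fun k =>
    ⟨le_min (by positivity) zero_le_one, min_le_right _ _⟩
  have hr0 : r 0 = 0 := by simp [hr]
  have hrN : r N = 1 := by simp [hr, div_self (ne_of_gt hN0)]
  have hrstep : ∀ k, k < N → r (k+1) - r k = 1/(N:ℝ) := by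
    intro k hk
    have h1 : ((k:ℝ)+1)/N ≤ 1 := by
      rw [div_le_one hN0]; exact_mod_cast hk
    have h2 : (k:ℝ)/N ≤ 1 := by
      rw [div_le_one hN0]; exact le_of_lt (by exact_mod_cast hk)
    rw [hr]; simp only
    rw [min_eq_left (by push_cast; linarith), min_eq_left h2]
    push_cast; field_simp; ring
  -- the point family
  set pt : ℕ → I × I → I × I := fun k x =>
    (⟨r k * (x.1 : ℝ), unitInterval.mul_mem (hr_mem k) x.1.2⟩,
     ⟨r k * (x.2 : ℝ), unitInterval.mul_mem (hr_mem k) x.2.2⟩) with hptdef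
  have hpt_cont : ∀ k, Continuous (pt k) := by
    intro k
    apply Continuous.prodMk
    · exact (continuous_const.mul (continuous_subtype_val.comp continuous_fst)).subtype_mk _
    · exact (continuous_const.mul (continuous_subtype_val.comp continuous_snd)).subtype_mk _
  have hpt0 : ∀ x, pt 0 x = ((⟨0, unitInterval.zero_mem⟩ : I), (⟨0, unitInterval.zero_mem⟩ : I)) := by
    intro x
    simp only [hptdef, hr0, zero_mul]
  have hptN : ∀ x, pt N x = x := by
    intro x
    simp only [hptdef, hrN, one_mul]
  have hdist : ∀ k x, k < N → dist (pt (k+1) x) (pt k x) < δ := by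
    intro k x hk
    have hb : ∀ t : I, dist (r (k+1) * (t:ℝ)) (r k * (t:ℝ)) ≤ 1/(N:ℝ) := by
      intro t
      rw [Real.dist_eq, ← sub_mul, abs_mul]
      have h1 : |r (k+1) - r k| = 1/(N:ℝ) := by
        rw [hrstep k hk]; exact abs_of_pos (by positivity)
      have h2 : |(t:ℝ)| ≤ 1 := by rw [_root_.abs_of_nonneg t.2.1]; exact t.2.2
      calc |r (k+1) - r k| * |(t:ℝ)| ≤ |r (k+1) - r k| * 1 := by
            exact mul_le_mul_of_nonneg_left h2 (abs_nonneg _)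
        _ = 1/(N:ℝ) := by rw [mul_one, h1]
    rw [Prod.dist_eq]
    apply lt_of_le_of_lt (max_le (le_trans (le_of_eq (Subtype.dist_eq _ _)) (hb x.1))
      (le_trans (le_of_eq (Subtype.dist_eq _ _)) (hb x.2))) hNδ
  -- ratios lie in the slit plane
  have hratio : ∀ k x, k < N →
      H (pt (k+1) x) / H (pt k x) ∈ Complex.slitPlane := by
    intro k x hk
    set w := H (pt (k+1) x) / H (pt k x) with hw
    have hne : norm (H (pt (k+1) x) - H (pt k x)) < ε := by
      have := hδ (hdist k x hk)
      rwa [Complex.dist_eq] at this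
    have habs : norm (w - 1) < 1 := by
      rw [hw]
      have h0 : H (pt k x) ≠ 0 := hH _
      have : H (pt (k+1) x) / H (pt k x) - 1 =
          (H (pt (k+1) x) - H (pt k x)) / H (pt k x) := by
        field_simp
      rw [this, norm_div, div_lt_one (by exact norm_pos_iff.mpr h0)]
      exact lt_of_lt_of_le hne (hmin _)
    apply Complex.mem_slitPlane_iff.mpr
    left
    have h1 : |(w - 1).re| < 1 := lt_of_le_of_lt (Complex.abs_re_le_norm _) habs
    have h2 : (w - 1).re = w.re - 1 := by simp
    have := abs_lt.mp h1
    linarith [this.1]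
  -- define the lift
  set L : I × I → ℂ := fun x =>
    Complex.log (H (pt 0 x)) +
      ∑ k ∈ Finset.range N, Complex.log (H (pt (k+1) x) / H (pt k x)) with hL
  have hLfirst : ∀ x, Complex.log (H (pt 0 x)) =
      Complex.log (H ((⟨0, unitInterval.zero_mem⟩ : I), (⟨0, unitInterval.zero_mem⟩ : I))) := by
    intro x; rw [hpt0 x]
  refine ⟨L, ?_, ?_⟩
  · -- continuity
    rw [hL]
    apply Continuous.add
    · exact continuous_const.congr fun x => (hLfirst x).symm
    · apply continuous_finset_sum
      intro k hk
      have hk' : k < N := Finset.mem_range.mp hk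
      have hcont : Continuous fun x => H (pt (k+1) x) / H (pt k x) :=
        (H.continuous.comp (hpt_cont (k+1))).div (H.continuous.comp (hpt_cont k))
          (fun x => hH _)
      rw [continuous_iff_continuousAt]
      intro x
      exact hcont.continuousAt.clog (hratio k x hk')
  · -- exponential property
    intro x
    rw [hL]
    simp only
    rw [Complex.exp_add, Complex.exp_sum]
    have hterm : ∀ k ∈ Finset.range N,
        Complex.exp (Complex.log (H (pt (k+1) x) / H (pt k x))) =
          H (pt (k+1) x) / H (pt k x) := by
      intro k _
      exact Complex.exp_log (div_ne_zero (hH _) (hH _))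
    rw [Finset.prod_congr rfl hterm, Complex.exp_log (hH _)]
    have tele : ∀ M : ℕ, ∏ k ∈ Finset.range M, (H (pt (k+1) x) / H (pt k x)) =
        H (pt M x) / H (pt 0 x) := by
      intro M
      induction M with
      | zero => simp [div_self (hH (pt 0 x))]
      | succ M ih =>
        rw [Finset.prod_range_succ, ih]
        have h1 : H (pt M x) ≠ 0 := hH _
        have h2 : H (pt 0 x) ≠ 0 := hH _
        field_simp
    rw [tele N, hptN x, mul_div_cancel₀]
    exact hH _
/-- A loop whose image under a nonvanishing "coordinate" map winds once around `0`
is not null-homotopic. -/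
lemma loop_not_nullhomotopic {X : Type*} [TopologicalSpace X] {x : X}
    (γ : Path x x) (φ : X → ℂ) (hφ : Continuous φ) (hφ0 : ∀ y, φ y ≠ 0)
    (hγ : ∀ t : I, φ (γ t) =
      Complex.exp (((2 * Real.pi * (t : ℝ) : ℝ) : ℂ) * Complex.I) * φ x)
    (h : Path.Homotopic γ (Path.refl x)) : False := by
  obtain ⟨F⟩ := h
  set G : C(I × I, ℂ) := ⟨fun p => φ (F p), hφ.comp F.continuous⟩ with hG
  obtain ⟨L, hLc, hLe⟩ := exists_exp_lift G (fun p => hφ0 _)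
  have h0mem : (0 : I) ∈ ({0, 1} : Set I) := Set.mem_insert _ _
  have h1mem : (1 : I) ∈ ({0, 1} : Set I) := Set.mem_insert_of_mem _ rfl
  -- edge values
  have e1 : ∀ t : I, G (0, t) =
      Complex.exp (((2 * Real.pi * (t : ℝ) : ℝ) : ℂ) * Complex.I) * φ x := by
    intro t
    have : F (0, t) = γ t := F.apply_zero t
    simp only [hG, ContinuousMap.coe_mk, this, hγ t]
  have e2 : ∀ t : I, G (1, t) = φ x := by
    intro t
    have : F (1, t) = x := by
      have := F.apply_one t
      simpa using this
    simp only [hG, ContinuousMap.coe_mk, this]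
  have e3 : ∀ s : I, G (s, 0) = φ x := by
    intro s
    have : F (s, 0) = γ 0 := F.eq_fst s h0mem
    simp only [hG, ContinuousMap.coe_mk, this, γ.source]
  have e4 : ∀ s : I, G (s, 1) = φ x := by
    intro s
    have : F (s, 1) = γ 1 := F.eq_fst s h1mem
    simp only [hG, ContinuousMap.coe_mk, this, γ.target]
  -- four applications of constancy
  have hD : L (0, 1) - ((2 * Real.pi : ℝ) : ℂ) * Complex.I = L (0, 0) := by
    have hDc : Continuous fun t : I =>
        L (0, t) - ((2 * Real.pi * (t : ℝ) : ℝ) : ℂ) * Complex.I := by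
      apply Continuous.sub
      · exact hLc.comp (continuous_const.prodMk continuous_id)
      · apply Continuous.mul _ continuous_const
        exact Complex.continuous_ofReal.comp
          ((continuous_const.mul continuous_subtype_val))
    have hDe : ∀ t u : I,
        Complex.exp (L (0, t) - ((2 * Real.pi * (t : ℝ) : ℝ) : ℂ) * Complex.I) =
        Complex.exp (L (0, u) - ((2 * Real.pi * (u : ℝ) : ℝ) : ℂ) * Complex.I) := by
      intro t u
      rw [Complex.exp_sub, Complex.exp_sub, hLe, hLe, e1, e1]
      field_simp [Complex.exp_ne_zero]
    have := eq_of_exp_comp_const hDc hDe 1 0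
    simpa using this
  have hA : L (1, 0) = L (0, 0) := by
    have hc : Continuous fun s : I => L (s, 0) :=
      hLc.comp (continuous_id.prodMk continuous_const)
    have he : ∀ s u : I, Complex.exp (L (s, 0)) = Complex.exp (L (u, 0)) := by
      intro s u; rw [hLe, hLe, e3, e3]
    exact eq_of_exp_comp_const hc he 1 0
  have hB : L (1, 1) = L (0, 1) := by
    have hc : Continuous fun s : I => L (s, 1) :=
      hLc.comp (continuous_id.prodMk continuous_const)
    have he : ∀ s u : I, Complex.exp (L (s, 1)) = Complex.exp (L (u, 1)) := by
      intro s u; rw [hLe, hLe, e4, e4]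
    exact eq_of_exp_comp_const hc he 1 0
  have hC : L (1, 1) = L (1, 0) := by
    have hc : Continuous fun t : I => L (1, t) :=
      hLc.comp (continuous_const.prodMk continuous_id)
    have he : ∀ t u : I, Complex.exp (L (1, t)) = Complex.exp (L (1, u)) := by
      intro t u; rw [hLe, hLe, e2, e2]
    exact eq_of_exp_comp_const hc he 1 0
  have : ((2 * Real.pi : ℝ) : ℂ) * Complex.I = 0 := by
    have h' := hD
    rw [← hB, hC, hA] at h'
    have := sub_eq_self.mp h'
    exact this
  have : (2 * Real.pi : ℝ) = 0 := by
    simpa [Complex.ext_iff, Real.pi_ne_zero] using this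
  simpa [Real.pi_ne_zero] using this
open Complex Polynomial Filter Topology

lemma tendsto_eval_div (r : Polynomial ℂ) (d : ℕ) (h : r.natDegree ≤ d) :
    Tendsto (fun x : ℝ => r.eval (x:ℂ) / (x:ℂ)^d) atTop (𝓝 (r.coeff d)) := by
  have h' : r.natDegree < d + 1 := Nat.lt_succ_of_le h
  have heq : ∀ x : ℝ, r.eval (x:ℂ) / (x:ℂ)^d =
      ∑ i ∈ Finset.range (d+1), r.coeff i * ((x:ℂ)^i / (x:ℂ)^d) := by
    intro x
    rw [Polynomial.eval_eq_sum_range' h', Finset.sum_div]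
    exact Finset.sum_congr rfl fun i _ => (mul_div_assoc _ _ _)
  have htarget : (∑ i ∈ Finset.range (d+1), if i = d then r.coeff d else 0) = r.coeff d := by
    simp
  rw [← htarget]
  apply Tendsto.congr (fun x => (heq x).symm)
  apply tendsto_finset_sum
  intro i hi
  rcases eq_or_lt_of_le (Nat.lt_succ_iff.mp (Finset.mem_range.mp hi)) with he | hl
  · subst he
    simp only [if_pos rfl]
    have hev : ∀ᶠ x : ℝ in atTop, r.coeff i = r.coeff i * ((x:ℂ)^i / (x:ℂ)^i) := by
      filter_upwards [eventually_ge_atTop (1:ℝ)] with x hx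
      have hx0 : (x:ℂ) ≠ 0 := by
        simp only [ne_eq, Complex.ofReal_eq_zero]
        linarith
      rw [div_self (pow_ne_zero _ hx0), mul_one]
    exact Tendsto.congr' hev tendsto_const_nhds
  · simp only [if_neg (Nat.ne_of_lt hl)]
    have hcast : ∀ x : ℝ, ((x:ℂ)^i / (x:ℂ)^d) = (((x^i / x^d : ℝ)) : ℂ) := by
      intro x; push_cast; ring
    have h0 : Tendsto (fun x : ℝ => (((x^i/x^d : ℝ)):ℂ)) atTop (𝓝 ((0:ℝ):ℂ)) :=
      (Complex.continuous_ofReal.tendsto _).comp (tendsto_pow_div_pow_atTop_zero hl)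
    have := h0.const_mul (r.coeff i)
    simp only [Complex.ofReal_zero, mul_zero] at this
    apply Tendsto.congr (fun x => by rw [hcast x]) this

lemma tendsto_abs_sq (r : Polynomial ℂ) (d : ℕ) (h : r.natDegree ≤ d) :
    Tendsto (fun x : ℝ => (norm (r.eval (x:ℂ)))^2 / x^(2*d)) atTop
      (𝓝 ((norm (r.coeff d))^2)) := by
  have h1 : Tendsto (fun x : ℝ => (norm (r.eval (x:ℂ) / (x:ℂ)^d))^2) atTop
      (𝓝 ((norm (r.coeff d))^2)) :=
    (((continuous_norm.tendsto _).comp (tendsto_eval_div r d h)).pow 2)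
  apply h1.congr'
  filter_upwards [eventually_gt_atTop (0:ℝ)] with x hx
  rw [norm_div, norm_pow, Complex.norm_real, Real.norm_eq_abs, _root_.abs_of_pos hx, div_pow,
    ← pow_mul, mul_comm d 2]

lemma tendsto_one_add_abs_sq (r : Polynomial ℂ) (d : ℕ) (h : r.natDegree ≤ d) (hd : 1 ≤ d) :
    Tendsto (fun x : ℝ => (1 + (norm (r.eval (x:ℂ)))^2) / x^(2*d)) atTop
      (𝓝 ((norm (r.coeff d))^2)) := by
  have h0 : Tendsto (fun x : ℝ => 1 / x^(2*d)) atTop (𝓝 0) := by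
    have := tendsto_pow_div_pow_atTop_zero (𝕜 := ℝ) (show 0 < 2*d by omega)
    apply this.congr
    intro x; rw [pow_zero]
  have := h0.add (tendsto_abs_sq r d h)
  rw [zero_add] at this
  apply this.congr
  intro x
  rw [← add_div]

lemma tendsto_main (u v : Polynomial ℂ) (a b : ℕ) (hu : u.natDegree ≤ a)
    (hv : v.natDegree ≤ b) (hb : 1 ≤ b) :
    Tendsto (fun x : ℝ =>
        (norm (u.eval (x:ℂ)))^2 * (1 + (norm (v.eval (x:ℂ)))^2)^2 / x^(2*a+4*b))
      atTop (𝓝 ((norm (u.coeff a))^2 * ((norm (v.coeff b))^2)^2)) := by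
  have h1 := tendsto_abs_sq u a hu
  have h2 := (tendsto_one_add_abs_sq v b hv hb).pow 2
  have h3 := h1.mul h2
  apply h3.congr
  intro x
  rw [div_pow, div_mul_div_comm, ← pow_mul, ← pow_add]
  congr 2
  ring

lemma coeff_dd (r : Polynomial ℂ) (k : ℕ) :
    (derivative (derivative r)).coeff k = r.coeff (k+2) * (((k+1 : ℕ) : ℂ) + 1) * ((k : ℂ) + 1) := by
  rw [coeff_derivative, coeff_derivative]

lemma cast_succ_ne_zero (k : ℕ) : ((k : ℂ) + 1) ≠ 0 := by
  exact_mod_cast Nat.cast_add_one_ne_zero (R := ℂ) k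

lemma coeff_n_ne_zero (n : ℕ) (hn : 2 ≤ n) (q p : Polynomial ℂ)
    (hq : q.natDegree = n) (hp : p.natDegree ≤ n)
    (hstar : ∀ x : ℝ,
      (norm ((derivative (derivative p)).eval (x:ℂ)))^2 *
          (1 + (norm ((derivative q).eval (x:ℂ)))^2)^2
        = (norm ((derivative (derivative q)).eval (x:ℂ)))^2 *
          (1 + (norm ((derivative p).eval (x:ℂ)))^2)^2) :
    p.coeff n ≠ 0 := by
  intro hpn
  obtain ⟨N, rfl⟩ : ∃ N, n = N + 2 := ⟨n - 2, by omega⟩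
  have hq0 : q ≠ 0 := by
    intro h; rw [h, natDegree_zero] at hq; omega
  have hqn : q.coeff (N+2) ≠ 0 := by
    rw [← hq]; exact mt leadingCoeff_eq_zero.mp hq0
  -- degree bounds for q
  have hdq' : (derivative q).natDegree ≤ N+1 := by
    have := natDegree_derivative_le q
    omega
  have hdq'' : (derivative (derivative q)).natDegree ≤ N := by
    have h1 := natDegree_derivative_le (derivative q)
    omega
  have hq'c : (derivative q).coeff (N+1) ≠ 0 := by
    rw [coeff_derivative]
    exact mul_ne_zero hqn (cast_succ_ne_zero (N+1))
  have hq''c : (derivative (derivative q)).coeff N ≠ 0 := by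
    rw [coeff_dd]
    exact mul_ne_zero (mul_ne_zero hqn (cast_succ_ne_zero (N+1))) (cast_succ_ne_zero N)
  by_cases hpdd : derivative (derivative p) = 0
  · -- q'' would vanish identically on the reals
    have hzero : ∀ x : ℝ, (derivative (derivative q)).eval (x:ℂ) = 0 := by
      intro x
      have h := hstar x
      rw [hpdd] at h
      simp only [eval_zero, map_zero, norm_zero] at h
      have hpos : (0:ℝ) < (1 + (norm ((derivative p).eval (x:ℂ)))^2)^2 := by positivity
      have : (norm ((derivative (derivative q)).eval (x:ℂ)))^2 = 0 := by
        nlinarith [h, hpos]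
      have := pow_eq_zero_iff (n := 2) (by norm_num) |>.mp this
      exact norm_eq_zero.mp this
    have : derivative (derivative q) = 0 :=
      Polynomial.eq_zero_of_infinite_isRoot _
        (Set.infinite_of_injective_forall_mem Complex.ofReal_injective hzero)
    rw [this] at hq''c
    simp at hq''c
  · -- p has degree m with 2 ≤ m < N+2
    have hp0 : p ≠ 0 := by
      intro h; apply hpdd; rw [h]; simp
    have hm2 : 2 ≤ p.natDegree := by
      by_contra hcon
      push_neg at hcon
      have h1 : (derivative p).natDegree = 0 := by
        have := natDegree_derivative_le p
        omega
      have h2 : derivative p = C ((derivative p).coeff 0) :=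
        eq_C_of_natDegree_le_zero (le_of_eq h1)
      apply hpdd
      rw [h2]; simp
    have hmn : p.natDegree < N + 2 := by
      rcases lt_or_eq_of_le hp with h | h
      · exact h
      · exfalso
        apply mt leadingCoeff_eq_zero.mp hp0
        rw [Polynomial.leadingCoeff, h]
        exact hpn
    obtain ⟨M, hM⟩ : ∃ M, p.natDegree = M + 2 := ⟨p.natDegree - 2, by omega⟩
    have hpm : p.coeff (M+2) ≠ 0 := by
      rw [← hM]; exact mt leadingCoeff_eq_zero.mp hp0
    have hdp' : (derivative p).natDegree ≤ M+1 := by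
      have := natDegree_derivative_le p
      omega
    have hdp'' : (derivative (derivative p)).natDegree ≤ M := by
      have := natDegree_derivative_le (derivative p)
      omega
    have hp''c : (derivative (derivative p)).coeff M ≠ 0 := by
      rw [coeff_dd]
      exact mul_ne_zero (mul_ne_zero hpm (cast_succ_ne_zero (M+1))) (cast_succ_ne_zero M)
    have hMN : M < N := by omega
    have hL := tendsto_main (derivative (derivative p)) (derivative q) M (N+1) hdp'' hdq'
      (by omega)
    -- RHS limit, split on parity of M+N
    have hzero_lim : (norm ((derivative (derivative p)).coeff M))^2 *
        ((norm ((derivative q).coeff (N+1)))^2)^2 = 0 := by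
      rcases Nat.even_or_odd (M + N) with ⟨t, ht⟩ | ⟨t, ht⟩
      · -- even : a' = N, b' = t+1
        have hb' : (derivative p).natDegree ≤ t + 1 := by omega
        have hcz : (derivative p).coeff (t+1) = 0 :=
          coeff_eq_zero_of_natDegree_lt (by omega)
        have hR := tendsto_main (derivative (derivative q)) (derivative p) N (t+1) hdq'' hb'
          (by omega)
        have hexp : 2*M + 4*(N+1) = 2*N + 4*(t+1) := by omega
        rw [hexp] at hL
        have hfun : (fun x : ℝ =>
            (norm ((derivative (derivative p)).eval (x:ℂ)))^2 *
              (1 + (norm ((derivative q).eval (x:ℂ)))^2)^2 / x^(2*N+4*(t+1))) =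
            (fun x : ℝ =>
            (norm ((derivative (derivative q)).eval (x:ℂ)))^2 *
              (1 + (norm ((derivative p).eval (x:ℂ)))^2)^2 / x^(2*N+4*(t+1))) := by
          funext x; rw [hstar x]
        rw [hfun] at hL
        have := tendsto_nhds_unique hL hR
        rw [hcz] at this
        simpa using this
      · -- odd : a' = N+1, b' = t+1
        have hb' : (derivative p).natDegree ≤ t + 1 := by omega
        have hcz : (derivative (derivative q)).coeff (N+1) = 0 :=
          coeff_eq_zero_of_natDegree_lt (by omega)
        have hR := tendsto_main (derivative (derivative q)) (derivative p) (N+1) (t+1) 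
          (by omega) hb' (by omega)
        have hexp : 2*M + 4*(N+1) = 2*(N+1) + 4*(t+1) := by omega
        rw [hexp] at hL
        have hfun : (fun x : ℝ =>
            (norm ((derivative (derivative p)).eval (x:ℂ)))^2 *
              (1 + (norm ((derivative q).eval (x:ℂ)))^2)^2 / x^(2*(N+1)+4*(t+1))) =
            (fun x : ℝ =>
            (norm ((derivative (derivative q)).eval (x:ℂ)))^2 *
              (1 + (norm ((derivative p).eval (x:ℂ)))^2)^2 / x^(2*(N+1)+4*(t+1))) := by
          funext x; rw [hstar x]
        rw [hfun] at hL
        have := tendsto_nhds_unique hL hR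
        rw [hcz] at this
        simpa using this
    have h1 : norm ((derivative (derivative p)).coeff M) ≠ 0 :=
      norm_ne_zero_iff.mpr hp''c
    have h2 : norm ((derivative q).coeff (N+1)) ≠ 0 :=
      norm_ne_zero_iff.mpr hq'c
    have : (norm ((derivative (derivative p)).coeff M))^2 *
        ((norm ((derivative q).coeff (N+1)))^2)^2 ≠ 0 := by positivity
    exact this hzero_lim
open Complex Polynomial Filter Topology

noncomputable def polyOf (n : ℕ) (c : Fin (n+1) → ℂ) : Polynomial ℂ :=
  ∑ i : Fin (n+1), Polynomial.C (c i) * Polynomial.X ^ (i : ℕ)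

lemma polyOf_eval (n : ℕ) (c : Fin (n+1) → ℂ) (w : ℂ) :
    (polyOf n c).eval w = ∑ i : Fin (n+1), c i * w ^ (i : ℕ) := by
  rw [polyOf, Polynomial.eval_finset_sum]
  simp

lemma polyOf_natDegree_le (n : ℕ) (c : Fin (n+1) → ℂ) : (polyOf n c).natDegree ≤ n := by
  apply Polynomial.natDegree_sum_le_of_forall_le
  intro i _
  exact (Polynomial.natDegree_C_mul_X_pow_le _ _).trans (Nat.lt_succ_iff.mp i.2)

lemma polyOf_coeff (n : ℕ) (c : Fin (n+1) → ℂ) (j : Fin (n+1)) :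
    (polyOf n c).coeff (j : ℕ) = c j := by
  rw [polyOf, Polynomial.finset_sum_coeff]
  rw [Finset.sum_eq_single j]
  · simp
  · intro i _ hij
    simp only [Polynomial.coeff_C_mul, Polynomial.coeff_X_pow]
    rw [if_neg (fun h => hij (Fin.ext h.symm))]
    simp
  · intro h; exact absurd (Finset.mem_univ j) h

lemma deriv_sum_eq (n : ℕ) (c : Fin (n+1) → ℂ) :
    deriv (fun w : ℂ => ∑ i : Fin (n+1), c i * w ^ (i : ℕ)) =
      fun z => (derivative (polyOf n c)).eval z := by
  have hfun : (fun w : ℂ => ∑ i : Fin (n+1), c i * w ^ (i : ℕ)) =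
      fun w => (polyOf n c).eval w := funext fun w => (polyOf_eval n c w).symm
  rw [hfun]
  funext z
  exact Polynomial.deriv _

lemma deriv2_sum_eq (n : ℕ) (c : Fin (n+1) → ℂ) :
    deriv (deriv (fun w : ℂ => ∑ i : Fin (n+1), c i * w ^ (i : ℕ))) =
      fun z => (derivative (derivative (polyOf n c))).eval z := by
  rw [deriv_sum_eq]
  funext z
  exact Polynomial.deriv _

lemma polyOf_smul (n : ℕ) (e : ℂ) (c : Fin (n+1) → ℂ) :
    polyOf n (fun i => e * c i) = Polynomial.C e * polyOf n c := by
  ext j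
  rw [Polynomial.coeff_C_mul]
  rcases lt_or_ge j (n+1) with hj | hj
  · have h1 := polyOf_coeff n (fun i => e * c i) ⟨j, hj⟩
    have h2 := polyOf_coeff n c ⟨j, hj⟩
    simp only [Fin.val_mk] at h1 h2 ⊢
    rw [h1, h2]
  · rw [Polynomial.coeff_eq_zero_of_natDegree_lt (lt_of_le_of_lt (polyOf_natDegree_le _ _) hj),
      Polynomial.coeff_eq_zero_of_natDegree_lt (lt_of_le_of_lt (polyOf_natDegree_le _ _) hj),
      mul_zero]

attribute [local instance] Path.Homotopic.setoid

open Complex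

/-- For `n ≥ 2` and a complex polynomial `P₀` of degree `n`, the space `S` of
coefficient vectors `c ∈ ℂ^{n+1}` whose associated polynomial
`p_c(z) = Σ cᵢ zⁱ` has the same curvature function as `P₀` has nontrivial
fundamental group at the coefficient vector of `P₀` (which lies in `S`). -/
theorem fundamentalGroup_of_same_curvature_space_nontrivial
    (n : ℕ) (hn : 2 ≤ n) (P₀ : Polynomial ℂ) (hdeg : P₀.natDegree = n)
    (S : Set (Fin (n + 1) → ℂ))
    (hS : S = {c : Fin (n + 1) → ℂ | ∀ z : ℂ,
      -(norm (deriv (deriv (fun w : ℂ => ∑ i : Fin (n + 1), c i * w ^ (i : ℕ))) z)) ^ 2 /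
          (1 + (norm (deriv (fun w : ℂ => ∑ i : Fin (n + 1), c i * w ^ (i : ℕ)) z)) ^ 2) ^ 2
      =
      -(norm ((Polynomial.derivative (Polynomial.derivative P₀)).eval z)) ^ 2 /
          (1 + (norm ((Polynomial.derivative P₀).eval z)) ^ 2) ^ 2}) :
    ∃ h : (fun i : Fin (n + 1) => P₀.coeff (i : ℕ)) ∈ S,
      ¬ Subsingleton (FundamentalGroup S ⟨fun i : Fin (n + 1) => P₀.coeff (i : ℕ), h⟩) := by
  -- membership criterion via `polyOf`
  have hcrit : ∀ c : Fin (n+1) → ℂ, c ∈ S ↔ ∀ z : ℂ,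
      -(norm ((Polynomial.derivative (Polynomial.derivative (polyOf n c))).eval z)) ^ 2 /
          (1 + (norm ((Polynomial.derivative (polyOf n c)).eval z)) ^ 2) ^ 2
      =
      -(norm ((Polynomial.derivative (Polynomial.derivative P₀)).eval z)) ^ 2 /
          (1 + (norm ((Polynomial.derivative P₀).eval z)) ^ 2) ^ 2 := by
    intro c
    rw [hS, Set.mem_setOf_eq]
    constructor
    · intro h z
      have := h z
      rwa [deriv2_sum_eq, deriv_sum_eq] at this
    · intro h z
      rw [deriv2_sum_eq, deriv_sum_eq]
      exact h z
  -- the basepoint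
  set c₀ : Fin (n+1) → ℂ := fun i => P₀.coeff (i : ℕ) with hc₀
  have hpoly0 : polyOf n c₀ = P₀ := by
    ext j
    rcases lt_or_ge j (n+1) with hj | hj
    · have := polyOf_coeff n c₀ ⟨j, hj⟩
      simpa using this
    · rw [Polynomial.coeff_eq_zero_of_natDegree_lt (lt_of_le_of_lt (polyOf_natDegree_le _ _) hj),
        Polynomial.coeff_eq_zero_of_natDegree_lt (by omega)]
  have h : c₀ ∈ S := by
    rw [hcrit, hpoly0]
    intro z
    rfl
  refine ⟨h, ?_⟩
  intro hsub
  set x : ↥S := ⟨c₀, h⟩ with hx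
  -- every point of S has nonzero top coefficient
  have htop : ∀ c : Fin (n+1) → ℂ, c ∈ S → c ⟨n, by omega⟩ ≠ 0 := by
    intro c hc
    have hstar : ∀ xr : ℝ,
        (norm ((Polynomial.derivative (Polynomial.derivative (polyOf n c))).eval
            ((xr : ℝ) : ℂ)))^2 *
          (1 + (norm ((Polynomial.derivative P₀).eval ((xr : ℝ) : ℂ)))^2)^2
        = (norm ((Polynomial.derivative (Polynomial.derivative P₀)).eval
            ((xr : ℝ) : ℂ)))^2 *
          (1 + (norm ((Polynomial.derivative (polyOf n c)).eval ((xr : ℝ) : ℂ)))^2)^2 := by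
      intro xr
      have hz := (hcrit c).mp hc ((xr : ℝ) : ℂ)
      set A := (norm ((Polynomial.derivative (Polynomial.derivative (polyOf n c))).eval
        ((xr : ℝ) : ℂ)))^2
      set B := (1 + (norm ((Polynomial.derivative (polyOf n c)).eval ((xr : ℝ) : ℂ)))^2)^2
      set Cq := (norm ((Polynomial.derivative (Polynomial.derivative P₀)).eval
        ((xr : ℝ) : ℂ)))^2
      set D := (1 + (norm ((Polynomial.derivative P₀).eval ((xr : ℝ) : ℂ)))^2)^2
      have hB : B ≠ 0 := by positivity
      have hD : D ≠ 0 := by positivity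
      rw [div_eq_div_iff hB hD] at hz
      linarith
    have := coeff_n_ne_zero n hn P₀ (polyOf n c) hdeg (polyOf_natDegree_le n c) hstar
    have hco := polyOf_coeff n c ⟨n, by omega⟩
    simp only [Fin.val_mk] at hco
    rw [hco] at this
    exact this
  -- the winding loop inside S
  have hloopmem : ∀ t : unitInterval,
      (fun i => Complex.exp (((2 * Real.pi * (t : ℝ) : ℝ) : ℂ) * Complex.I) * c₀ i) ∈ S := by
    intro t
    set e : ℂ := Complex.exp (((2 * Real.pi * (t : ℝ) : ℝ) : ℂ) * Complex.I) with he
    have habs : norm e = 1 := Complex.norm_exp_ofReal_mul_I _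
    rw [hcrit]
    intro z
    rw [polyOf_smul, hpoly0, Polynomial.derivative_C_mul, Polynomial.derivative_C_mul,
      Polynomial.eval_mul, Polynomial.eval_mul, Polynomial.eval_C, norm_mul, norm_mul, habs,
      one_mul, one_mul]
  set γ : Path x x :=
    { toFun := fun t => ⟨fun i => Complex.exp (((2 * Real.pi * (t : ℝ) : ℝ) : ℂ) * Complex.I)
        * c₀ i, hloopmem t⟩
      continuous_toFun := by
        apply Continuous.subtype_mk
        apply continuous_pi
        intro i
        apply Continuous.mul _ continuous_const
        exact Complex.continuous_exp.comp
          ((Complex.continuous_ofReal.comp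
            ((continuous_const.mul continuous_subtype_val))).mul continuous_const)
      source' := by
        apply Subtype.ext
        funext i
        simp
        rfl
      target' := by
        apply Subtype.ext
        funext i
        have : ((2 * Real.pi * ((1 : unitInterval) : ℝ) : ℝ) : ℂ) * Complex.I
            = 2 * (Real.pi : ℂ) * Complex.I := by
          push_cast
          ring
        simp only [this]
        rw [show (2 * (Real.pi : ℂ) * Complex.I) = 2 * Real.pi * Complex.I by push_cast; ring,
          Complex.exp_two_pi_mul_I, one_mul] } with hγ
  -- the coordinate map
  set φ : ↥S → ℂ := fun c => (c : Fin (n+1) → ℂ) ⟨n, by omega⟩ with hφdef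
  have hφc : Continuous φ := (continuous_apply _).comp continuous_subtype_val
  have hφ0 : ∀ y : ↥S, φ y ≠ 0 := fun y => htop y.1 y.2
  have hγval : ∀ t : unitInterval, φ (γ t) =
      Complex.exp (((2 * Real.pi * (t : ℝ) : ℝ) : ℂ) * Complex.I) * φ x := by
    intro t
    rfl
  -- extract homotopy from subsingleton hypothesis
  have hhom : Path.Homotopic γ (Path.refl x) := by
    have heq : (FundamentalGroup.fromPath (X := TopCat.of ↥S) (⟦γ⟧ : Path.Homotopic.Quotient x x))
        = FundamentalGroup.fromPath (X := TopCat.of ↥S)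
          (⟦Path.refl x⟧ : Path.Homotopic.Quotient x x) := hsub.elim _ _
    have harr := congrArg (fun (a : FundamentalGroup (TopCat.of ↥S) x) => a) heq
    exact Quotient.exact harr
  exact loop_not_nullhomotopic γ φ hφc hφ0 hγval hhom
end
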